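/- arXiv:2506.10827 — 6 statements merged into one kernel-verified Lean document; each statement's English description precedes it below -/
import Mathlib

section
/- Let (Q,m) be a noetherian local ring, let x₁,…,x_d ∈ m be a regular sequence on Q, and let f₁,…,f_n be monomials on x (each f_j = ∏_l x_l^{(a_j)_l} with a_j ∈ ℕ^d, a_j ≠ 0). Fix 1 ≤ c ≤ n and suppose that for every 1 ≤ i ≤ c and every j ∈ {1,…,n} with j ≠ i, the supports of f_i and f_j are disjoint. Then f₁,…,f_c is a regular sequence on the quotient ring Q/(f_{c+1},…,f_n). -/
open RingTheory.Sequence IsLocalRing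

section QuotHelpers
variable {Q : Type*} [CommRing Q]

private lemma aux_smul_top (K : Ideal Q) : (K • (⊤ : Submodule Q Q)) = K := by
  rw [smul_eq_mul, Ideal.mul_top]

private lemma aux_isSMulRegular_of_smul_eq_zero {M : Type*} [AddCommGroup M] [Module Q M] {g : Q}
    (h : ∀ m : M, g • m = 0 → m = 0) : IsSMulRegular M g := fun a b hab =>
  sub_eq_zero.mp (h _ (by rw [smul_sub, sub_eq_zero]; exact hab))

private lemma aux_mem_smul_top_iff (K J : Ideal Q) (q : Q) :
    (Submodule.Quotient.mk q : Q ⧸ K) ∈ (J • ⊤ : Submodule Q (Q ⧸ K)) ↔ q ∈ K ⊔ J := by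
  have h1 : (J • ⊤ : Submodule Q (Q ⧸ K)) = Submodule.map K.mkQ J := by
    rw [← Submodule.range_mkQ K, ← Submodule.map_top, ← Submodule.map_smul'', aux_smul_top]
  rw [h1, Submodule.mem_map, Submodule.mem_sup]
  constructor
  · rintro ⟨j, hj, hjq⟩
    rw [Submodule.mkQ_apply, Submodule.Quotient.eq K] at hjq
    exact ⟨q - j, by simpa using (neg_mem hjq), j, hj, by ring⟩
  · rintro ⟨k, hk, j, hj, hkj⟩
    refine ⟨j, hj, ?_⟩
    rw [Submodule.mkQ_apply, Submodule.Quotient.eq K]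
    have : j - q = -k := by rw [← hkj]; ring
    rw [this]
    exact neg_mem hk

private lemma aux_isSMulRegular_quot_iff (K J : Ideal Q) (g : Q) :
    IsSMulRegular ((Q ⧸ K) ⧸ (J • ⊤ : Submodule Q (Q ⧸ K))) g ↔
      ∀ q : Q, g * q ∈ K ⊔ J → q ∈ K ⊔ J := by
  have key : ∀ q : Q,
      (Submodule.Quotient.mk (Submodule.Quotient.mk q : Q ⧸ K) :
        (Q ⧸ K) ⧸ (J • ⊤ : Submodule Q (Q ⧸ K))) = 0 ↔ q ∈ K ⊔ J := fun q => by
    rw [Submodule.Quotient.mk_eq_zero, aux_mem_smul_top_iff]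
  have smul_mk : ∀ q : Q,
      g • (Submodule.Quotient.mk (Submodule.Quotient.mk q : Q ⧸ K) :
        (Q ⧸ K) ⧸ (J • ⊤ : Submodule Q (Q ⧸ K))) =
      Submodule.Quotient.mk (Submodule.Quotient.mk (g * q) : Q ⧸ K) := fun q => by
    rw [← Submodule.Quotient.mk_smul, ← Submodule.Quotient.mk_smul, smul_eq_mul]
  constructor
  · intro h q hq
    rw [← key]
    have h0 : g • (Submodule.Quotient.mk (Submodule.Quotient.mk q : Q ⧸ K) :
        (Q ⧸ K) ⧸ (J • ⊤ : Submodule Q (Q ⧸ K))) = g • 0 := by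
      rw [smul_zero, smul_mk, key]
      exact hq
    exact h h0
  · intro h
    apply aux_isSMulRegular_of_smul_eq_zero
    intro m hm
    obtain ⟨m', rfl⟩ := Submodule.Quotient.mk_surjective _ m
    obtain ⟨q, rfl⟩ := Submodule.Quotient.mk_surjective _ m'
    rw [smul_mk, key] at hm
    rw [key]
    exact h q hm

private lemma aux_isSMulRegular_quot_iff₀ (K : Ideal Q) (g : Q) :
    IsSMulRegular (Q ⧸ (K • ⊤ : Submodule Q Q)) g ↔ ∀ q : Q, g * q ∈ K → q ∈ K := by
  rw [aux_smul_top]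
  have key : ∀ q : Q, (Submodule.Quotient.mk q : Q ⧸ K) = 0 ↔ q ∈ K := fun q =>
    Submodule.Quotient.mk_eq_zero K
  have smul_mk : ∀ q : Q, g • (Submodule.Quotient.mk q : Q ⧸ K) =
      Submodule.Quotient.mk (g * q) := fun q => by
    rw [← Submodule.Quotient.mk_smul, smul_eq_mul]
  constructor
  · intro h q hq
    rw [← key]
    have h0 : g • (Submodule.Quotient.mk q : Q ⧸ K) = g • 0 := by
      rw [smul_zero, smul_mk, key]; exact hq
    exact h h0
  · intro h
    apply aux_isSMulRegular_of_smul_eq_zero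
    intro m hm
    obtain ⟨q, rfl⟩ := Submodule.Quotient.mk_surjective _ m
    rw [smul_mk, key] at hm
    rw [key]
    exact h q hm

private lemma aux_isWeaklyRegular_quotient (K : Ideal Q) (gs : List Q)
    (h : ∀ (i : ℕ) (hi : i < gs.length) (q : Q),
      gs[i] * q ∈ K ⊔ Ideal.ofList (gs.take i) → q ∈ K ⊔ Ideal.ofList (gs.take i)) :
    IsWeaklyRegular (Q ⧸ K) gs := by
  rw [isWeaklyRegular_iff]
  intro i hi
  exact (aux_isSMulRegular_quot_iff K _ _).mpr (h i hi)

private lemma aux_ofList_perm {l l' : List Q} (h : l.Perm l') :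
    Ideal.ofList l = Ideal.ofList l' :=
  congrArg Ideal.span (Set.ext fun _ => h.mem_iff)

end QuotHelpers

section Perm
open List
variable {Q : Type*} [CommRing Q] [IsNoetherianRing Q] [IsLocalRing Q]
  {d : ℕ} {x : Fin d → Q}

private lemma aux_exists_perm_append {α : Type*} {l l₂ : List α} (h : l.Sublist l₂) :
    ∃ r, l₂.Perm (l ++ r) := by
  induction h with
  | slnil => exact ⟨[], List.Perm.refl _⟩
  | cons a h ih =>
    obtain ⟨r, hr⟩ := ih
    exact ⟨a :: r, ((hr.cons a).trans List.perm_middle.symm)⟩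
  | cons_cons a h ih =>
    obtain ⟨r, hr⟩ := ih
    exact ⟨r, hr.cons a⟩

private lemma aux_weaklyRegular_of_nodup
    (hxm : ∀ l, x l ∈ IsLocalRing.maximalIdeal Q)
    (hx : RingTheory.Sequence.IsRegular Q (List.ofFn x))
    (ts : List (Fin d)) (hts : ts.Nodup) :
    RingTheory.Sequence.IsWeaklyRegular Q (ts.map x) := by
  obtain ⟨u, hu1, hu2⟩ := hts.subperm (fun a _ => List.mem_finRange a)
  obtain ⟨r, hr⟩ := aux_exists_perm_append hu2
  have hperm : (List.ofFn x).Perm ((u.map x) ++ (r.map x)) := by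
    rw [List.ofFn_eq_map, ← List.map_append]
    exact hr.map x
  have hreg := IsLocalRing.isRegular_of_perm hx hperm
  have h1 := ((RingTheory.Sequence.isWeaklyRegular_append_iff Q (u.map x) (r.map x)).mp
    hreg.toIsWeaklyRegular).1
  refine IsLocalRing.isWeaklyRegular_of_perm_of_subset_maximalIdeal h1 (hu1.map x) ?_
  intro y hy
  obtain ⟨l, -, rfl⟩ := List.mem_map.mp hy
  exact hxm l

private lemma aux_x_nzd
    (hxm : ∀ l, x l ∈ IsLocalRing.maximalIdeal Q)
    (hx : RingTheory.Sequence.IsRegular Q (List.ofFn x))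
    (ts : List (Fin d)) (hts : ts.Nodup) (l : Fin d) (hl : l ∉ ts) :
    ∀ q, x l * q ∈ Ideal.ofList (ts.map x) → q ∈ Ideal.ofList (ts.map x) := by
  have hnd : (ts ++ [l]).Nodup := by
    rw [List.nodup_append]
    exact ⟨hts, List.nodup_singleton l, by simpa using fun a (ha : a ∈ ts) (h : a = l) => hl (h ▸ ha)⟩
  have h := aux_weaklyRegular_of_nodup hxm hx (ts ++ [l]) hnd
  rw [List.map_append, RingTheory.Sequence.isWeaklyRegular_append_iff] at h
  have h2 := h.2
  rw [show ([l] : List (Fin d)).map x = [x l] from rfl,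
    RingTheory.Sequence.isWeaklyRegular_singleton_iff] at h2
  exact (aux_isSMulRegular_quot_iff₀ _ _).mp h2

private lemma aux_nzd_mul {K : Ideal Q} {u v : Q}
    (hu : ∀ q, u * q ∈ K → q ∈ K) (hv : ∀ q, v * q ∈ K → q ∈ K) :
    ∀ q, (u * v) * q ∈ K → q ∈ K := fun q hq =>
  hv q (hu _ (by rwa [← mul_assoc]))

private lemma aux_nzd_pow {K : Ideal Q} {u : Q} (hu : ∀ q, u * q ∈ K → q ∈ K) :
    ∀ m : ℕ, ∀ q, u ^ m * q ∈ K → q ∈ K := by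
  intro m
  induction m with
  | zero => intro q hq; simpa using hq
  | succ m ih =>
    intro q hq
    rw [pow_succ] at hq
    exact ih q (hu _ (by rwa [show u * (u ^ m * q) = u ^ m * u * q by ring]))

end Perm

section Mon
variable {Q : Type*} [CommRing Q] {d : ℕ}

private def auxMon (x : Fin d → Q) (β : Fin d → ℕ) : Q := ∏ l, x l ^ β l

private def auxDeg {d : ℕ} (β : Fin d → ℕ) : ℕ := ∑ l, β l

private lemma auxMon_zero (x : Fin d → Q) : auxMon x 0 = 1 := by simp [auxMon]

private lemma auxMon_single (x : Fin d → Q) (l₀ : Fin d) :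
    auxMon x (Pi.single l₀ 1) = x l₀ := by
  unfold auxMon
  rw [Finset.prod_eq_single l₀ (fun b _ hb => by rw [Pi.single_eq_of_ne hb, pow_zero])
    (fun h => absurd (Finset.mem_univ l₀) h)]
  rw [Pi.single_eq_same, pow_one]

private lemma auxMon_factor (x : Fin d → Q) {β : Fin d → ℕ} {l₀ : Fin d} (h : β l₀ ≠ 0) :
    auxMon x β = x l₀ * auxMon x (Function.update β l₀ (β l₀ - 1)) := by
  unfold auxMon
  have hprod : ∏ l ∈ Finset.univ.erase l₀, x l ^ (Function.update β l₀ (β l₀ - 1)) l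
      = ∏ l ∈ Finset.univ.erase l₀, x l ^ β l :=
    Finset.prod_congr rfl (fun l hl => by
      rw [Function.update_of_ne (Finset.ne_of_mem_erase hl)])
  rw [← Finset.mul_prod_erase Finset.univ _ (Finset.mem_univ l₀),
    ← Finset.mul_prod_erase Finset.univ (fun l => x l ^ (Function.update β l₀ (β l₀ - 1)) l)
      (Finset.mem_univ l₀), hprod, Function.update_self, ← mul_assoc, ← pow_succ']
  congr 2
  omega

private lemma auxDeg_pos {β : Fin d → ℕ} (h : β ≠ 0) : 1 ≤ auxDeg β := by
  obtain ⟨l, hl⟩ := Function.ne_iff.mp h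
  calc 1 ≤ β l := Nat.pos_of_ne_zero hl
  _ ≤ auxDeg β := Finset.single_le_sum (fun i _ => Nat.zero_le _) (Finset.mem_univ l)

private lemma auxDeg_update {β : Fin d → ℕ} {l₀ : Fin d} (h : β l₀ ≠ 0) :
    auxDeg (Function.update β l₀ (β l₀ - 1)) + 1 = auxDeg β := by
  unfold auxDeg
  have hsum : ∑ l ∈ Finset.univ.erase l₀, (Function.update β l₀ (β l₀ - 1)) l
      = ∑ l ∈ Finset.univ.erase l₀, β l :=
    Finset.sum_congr rfl (fun l hl => by
      rw [Function.update_of_ne (Finset.ne_of_mem_erase hl)])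
  rw [← Finset.add_sum_erase Finset.univ _ (Finset.mem_univ l₀),
    ← Finset.add_sum_erase Finset.univ β (Finset.mem_univ l₀), hsum, Function.update_self]
  omega

private lemma aux_deg_sum_update (l₀ : Fin d) :
    ∀ A : List (Fin d → ℕ), (∀ γ ∈ A, γ l₀ ≠ 0) →
      ((A.map (fun γ => Function.update γ l₀ (γ l₀ - 1))).map auxDeg).sum + A.length
    = (A.map auxDeg).sum := by
  intro A
  induction A with
  | nil => simp
  | cons γ A ih =>
    intro h
    have h1 := auxDeg_update (h γ (List.mem_cons_self))
    have h2 := ih fun γ' hγ' => h γ' (List.mem_cons_of_mem γ hγ')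
    simp only [List.map_cons, List.sum_cons, List.length_cons]
    linarith

end Mon

section MainLemma
variable {Q : Type*} [CommRing Q] [IsNoetherianRing Q] [IsLocalRing Q] {d : ℕ} {x : Fin d → Q}

set_option maxHeartbeats 1000000 in
private lemma aux_main
    (hxm : ∀ l, x l ∈ IsLocalRing.maximalIdeal Q)
    (hx : RingTheory.Sequence.IsRegular Q (List.ofFn x)) :
    ∀ (S : ℕ) (ts : List (Fin d)) (hs : List (Fin d → ℕ)) (β : Fin d → ℕ),
      ts.Nodup → ((hs.map auxDeg).sum ≤ S) → β ≠ 0 →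
      (∀ l ∈ ts, β l = 0) →
      (∀ γ ∈ hs, ∀ l, γ l = 0 ∨ β l = 0) →
      (∀ γ ∈ hs, ∀ l ∈ ts, γ l = 0) →
      ∀ q : Q, auxMon x β * q ∈ Ideal.ofList (ts.map x) ⊔ Ideal.ofList (hs.map (auxMon x)) →
        q ∈ Ideal.ofList (ts.map x) ⊔ Ideal.ofList (hs.map (auxMon x)) := by
  intro S
  induction S using Nat.strong_induction_on with
  | _ S IH =>
  rintro ts (_ | ⟨α₀, hs'⟩) β hnd hdeg hβ hβts hβhs hhts q hq
  · -- base case : no monomial generators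
    simp only [List.map_nil, Ideal.ofList_nil, sup_bot_eq] at hq ⊢
    revert hq
    refine Finset.prod_induction (fun l => x l ^ β l)
      (fun y => ∀ q : Q, y * q ∈ Ideal.ofList (ts.map x) → q ∈ Ideal.ofList (ts.map x))
      (fun a b ha hb => aux_nzd_mul ha hb) (fun q hq => by simpa using hq) ?_ q
    intro l _
    show ∀ q : Q, x l ^ β l * q ∈ Ideal.ofList (ts.map x) → q ∈ Ideal.ofList (ts.map x)
    by_cases h0 : β l = 0
    · rw [h0, pow_zero]
      intro q hq; simpa using hq
    · exact aux_nzd_pow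
        (aux_x_nzd hxm hx ts hnd l (fun hmem => h0 (hβts l hmem))) (β l)
  · -- main case
    by_cases hz : ∃ γ ∈ α₀ :: hs', γ = 0
    · obtain ⟨γ, hγ, rfl⟩ := hz
      have h1 : (1 : Q) ∈ Ideal.ofList ((α₀ :: hs').map (auxMon x)) := by
        apply Ideal.subset_span
        rw [← auxMon_zero x]
        exact Set.mem_setOf.mpr (List.mem_map.mpr ⟨0, hγ, rfl⟩)
      have htop : Ideal.ofList (ts.map x) ⊔ Ideal.ofList ((α₀ :: hs').map (auxMon x)) = ⊤ :=
        top_unique (fun z _ => by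
          simpa using Submodule.smul_mem _ z (Submodule.mem_sup_right h1))
      rw [htop]
      trivial
    push_neg at hz
    have hα₀ : α₀ ≠ 0 := hz α₀ (List.mem_cons_self)
    obtain ⟨l₀, hl₀⟩ := Function.ne_iff.mp hα₀
    have hl₀ : α₀ l₀ ≠ 0 := by simpa using hl₀
    have hl₀ts : l₀ ∉ ts := fun h => hl₀ (hhts α₀ (List.mem_cons_self) l₀ h)
    have hβl₀ : β l₀ = 0 :=
      (hβhs α₀ (List.mem_cons_self) l₀).resolve_left hl₀
    set p : (Fin d → ℕ) → Bool := fun γ => γ l₀ == 0 with hp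
    set B := (α₀ :: hs').filter p with hB
    set A := (α₀ :: hs').filter (fun γ => !p γ) with hA
    have hperm : (B ++ A).Perm (α₀ :: hs') := List.filter_append_perm p _
    have hmemB : ∀ γ, γ ∈ B ↔ γ ∈ α₀ :: hs' ∧ γ l₀ = 0 := fun γ => by
      simp [hB, hp, List.mem_filter]
    have hmemA : ∀ γ, γ ∈ A ↔ γ ∈ α₀ :: hs' ∧ γ l₀ ≠ 0 := fun γ => by
      simp [hA, hp, List.mem_filter]
    have hα₀A : α₀ ∈ A := (hmemA α₀).mpr ⟨List.mem_cons_self, hl₀⟩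
    set upd : (Fin d → ℕ) → (Fin d → ℕ) := fun γ => Function.update γ l₀ (γ l₀ - 1) with hupd
    set A' := A.map upd with hA'
    set T := Ideal.ofList (ts.map x) with hT
    set Bp := Ideal.ofList (B.map (auxMon x)) with hBp
    set Ap := Ideal.ofList (A.map (auxMon x)) with hAp
    set A'p := Ideal.ofList (A'.map (auxMon x)) with hA'p
    have hH : Ideal.ofList ((α₀ :: hs').map (auxMon x)) = Bp ⊔ Ap := by
      rw [hBp, hAp, ← Ideal.ofList_append, ← List.map_append]
      exact (aux_ofList_perm ((hperm.map (auxMon x)))).symm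
    have hAfact : ∀ γ ∈ A, auxMon x γ = x l₀ * auxMon x (upd γ) := fun γ hγ =>
      auxMon_factor x ((hmemA γ).mp hγ).2
    -- Ap = (x l₀) * A'p
    have hsplit : ∀ z ∈ Ap, ∃ y ∈ A'p, x l₀ * y = z := by
      have hle : Ap ≤ Submodule.map (LinearMap.mulLeft Q (x l₀)) A'p := by
        rw [hAp]
        refine Ideal.span_le.mpr ?_
        rintro r hr
        obtain ⟨γ, hγ, rfl⟩ := List.mem_map.mp hr
        refine Submodule.mem_map.mpr ⟨auxMon x (upd γ), ?_, ?_⟩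
        · exact Ideal.subset_span (List.mem_map.mpr ⟨upd γ, List.mem_map.mpr ⟨γ, hγ, rfl⟩, rfl⟩)
        · exact (hAfact γ hγ).symm
      intro z hz
      obtain ⟨y, hy, hyz⟩ := Submodule.mem_map.mp (hle hz)
      exact ⟨y, hy, hyz⟩
    have hmul : ∀ y ∈ A'p, x l₀ * y ∈ Ap := by
      have hle : A'p ≤ Submodule.comap (LinearMap.mulLeft Q (x l₀)) Ap := by
        rw [hA'p]
        refine Ideal.span_le.mpr ?_
        rintro r hr
        obtain ⟨γ', hγ', rfl⟩ := List.mem_map.mp hr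
        obtain ⟨γ, hγ, rfl⟩ := List.mem_map.mp hγ'
        refine Submodule.mem_comap.mpr ?_
        show x l₀ * auxMon x (upd γ) ∈ Ap
        rw [← hAfact γ hγ]
        exact Ideal.subset_span (List.mem_map.mpr ⟨γ, hγ, rfl⟩)
      exact fun y hy => hle hy
    -- degree bookkeeping
    have hsum : ((B.map auxDeg).sum + (A.map auxDeg).sum) = ((α₀ :: hs').map auxDeg).sum := by
      rw [← List.sum_append, ← List.map_append]
      exact List.Perm.sum_eq (hperm.map auxDeg)
    have hSA : 1 ≤ (A.map auxDeg).sum :=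
      le_trans (auxDeg_pos hα₀)
        (List.le_sum_of_mem (List.mem_map.mpr ⟨α₀, hα₀A, rfl⟩))
    have hSB : (B.map auxDeg).sum < S := by
      have := hdeg
      omega
    have hAne : ∀ γ ∈ A, γ l₀ ≠ 0 := fun γ hγ => ((hmemA γ).mp hγ).2
    have hSA' : ((A'.map auxDeg).sum + A.length) = (A.map auxDeg).sum := by
      rw [hA']
      exact aux_deg_sum_update l₀ A hAne
    have hAlen : 1 ≤ A.length := List.length_pos_iff.mpr (List.ne_nil_of_mem hα₀A)
    have hSBA' : ((B ++ A').map auxDeg).sum < S := by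
      rw [List.map_append, List.sum_append]
      have := hdeg
      omega
    -- side conditions
    have hndts1 : (ts ++ [l₀]).Nodup := by
      rw [List.nodup_append]
      exact ⟨hnd, List.nodup_singleton l₀, by simpa using fun a (ha : a ∈ ts) (h : a = l₀) => hl₀ts (h ▸ ha)⟩
    have hts1 : Ideal.ofList ((ts ++ [l₀]).map x) = T ⊔ Ideal.span {x l₀} := by
      rw [List.map_append, Ideal.ofList_append, hT]
      congr 1
      exact Ideal.ofList_singleton (x l₀)
    have hβts1 : ∀ l ∈ ts ++ [l₀], β l = 0 := fun l hl => by
      rcases List.mem_append.mp hl with h | h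
      · exact hβts l h
      · rw [List.mem_singleton.mp h]; exact hβl₀
    have hβB : ∀ γ ∈ B, ∀ l, γ l = 0 ∨ β l = 0 := fun γ hγ =>
      hβhs γ ((hmemB γ).mp hγ).1
    have hBts1 : ∀ γ ∈ B, ∀ l ∈ ts ++ [l₀], γ l = 0 := fun γ hγ l hl => by
      rcases List.mem_append.mp hl with h | h
      · exact hhts γ ((hmemB γ).mp hγ).1 l h
      · rw [List.mem_singleton.mp h]; exact ((hmemB γ).mp hγ).2
    -- Call 1
    have hq' : auxMon x β * q ∈ (T ⊔ Ideal.span {x l₀}) ⊔ Bp := by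
      rw [hH] at hq
      have hle : T ⊔ (Bp ⊔ Ap) ≤ (T ⊔ Ideal.span {x l₀}) ⊔ Bp := by
        refine sup_le (le_sup_of_le_left le_sup_left) (sup_le le_sup_right
          (le_sup_of_le_left (le_sup_of_le_right ?_)))
        intro z hz
        obtain ⟨y, hy, rfl⟩ := hsplit z hz
        exact Ideal.mul_mem_right y _ (Ideal.subset_span rfl)
      exact hle hq
    have call1 := IH ((B.map auxDeg).sum) hSB (ts ++ [l₀]) B β hndts1 le_rfl hβ hβts1 hβB
      hBts1 q (by rw [hts1]; exact hq')
    rw [hts1] at call1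
    obtain ⟨w, hw, r, hr, hwr⟩ := Submodule.mem_sup.mp call1
    obtain ⟨τ, hτ, s, hss, hτs⟩ := Submodule.mem_sup.mp hw
    obtain ⟨b, hb⟩ := Ideal.mem_span_singleton'.mp hss
    -- extract the A-part
    have hz1 : x l₀ * (auxMon x β * b) ∈ (T ⊔ Bp) ⊔ Ap := by
      have heq : x l₀ * (auxMon x β * b) =
          auxMon x β * q - auxMon x β * τ - auxMon x β * r := by
        rw [← hwr, ← hτs, ← hb]; ring
      rw [heq, sup_assoc]
      rw [hH] at hq
      refine sub_mem (sub_mem hq ?_) ?_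
      · exact Submodule.mem_sup_left (Ideal.mul_mem_left _ _ hτ)
      · exact Submodule.mem_sup_right (Submodule.mem_sup_left (Ideal.mul_mem_left _ _ hr))
    obtain ⟨σ, hσ, π, hπ, hσπ⟩ := Submodule.mem_sup.mp hz1
    obtain ⟨y, hyA', hy⟩ := hsplit π hπ
    have hz3 : x l₀ * (auxMon x β * b - y) ∈ T ⊔ Bp := by
      have : x l₀ * (auxMon x β * b - y) = σ := by
        rw [mul_sub, hy, ← hσπ]; ring
      rw [this]; exact hσ
    -- Call 2
    have hsingle : (Pi.single l₀ 1 : Fin d → ℕ) ≠ 0 := fun h => by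
      have := congrFun h l₀
      rw [Pi.single_eq_same] at this
      exact one_ne_zero this
    have call2 := IH ((B.map auxDeg).sum) hSB ts B (Pi.single l₀ 1) hnd le_rfl hsingle
      (fun l hl => Pi.single_eq_of_ne (fun h => hl₀ts (by rw [← h]; exact hl)) 1)
      (fun γ hγ l => by
        by_cases h : l = l₀
        · exact Or.inl (h ▸ ((hmemB γ).mp hγ).2)
        · exact Or.inr (Pi.single_eq_of_ne h 1))
      (fun γ hγ l hl => hhts γ ((hmemB γ).mp hγ).1 l hl)
      (auxMon x β * b - y) (by rw [auxMon_single]; exact hz3)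
    -- Call 3
    have hb2 : auxMon x β * b ∈ T ⊔ Ideal.ofList ((B ++ A').map (auxMon x)) := by
      rw [List.map_append, Ideal.ofList_append, ← hBp, ← hA'p, ← sup_assoc]
      have := add_mem (Submodule.mem_sup.mp call2 |> fun h => (le_sup_left :
        T ⊔ Bp ≤ (T ⊔ Bp) ⊔ A'p) call2) (Submodule.mem_sup_right hyA' :
        y ∈ (T ⊔ Bp) ⊔ A'p)
      simpa using this
    have hβBA' : ∀ γ ∈ B ++ A', ∀ l, γ l = 0 ∨ β l = 0 := fun γ hγ l => by
      rcases List.mem_append.mp hγ with h | h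
      · exact hβB γ h l
      · obtain ⟨δ, hδ, rfl⟩ := List.mem_map.mp h
        by_cases hll : l = l₀
        · subst hll; exact Or.inr hβl₀
        · rw [hupd]
          beta_reduce
          rw [Function.update_of_ne hll]
          exact hβhs δ ((hmemA δ).mp hδ).1 l
    have hBA'ts : ∀ γ ∈ B ++ A', ∀ l ∈ ts, γ l = 0 := fun γ hγ l hl => by
      rcases List.mem_append.mp hγ with h | h
      · exact hhts γ ((hmemB γ).mp h).1 l hl
      · obtain ⟨δ, hδ, rfl⟩ := List.mem_map.mp h
        have hll : l ≠ l₀ := fun hc => hl₀ts (hc ▸ hl)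
        rw [hupd]
        beta_reduce
        rw [Function.update_of_ne hll]
        exact hhts δ ((hmemA δ).mp hδ).1 l hl
    have call3 := IH (((B ++ A').map auxDeg).sum) hSBA' ts (B ++ A') β hnd le_rfl hβ hβts
      hβBA' hBA'ts b hb2
    rw [List.map_append, Ideal.ofList_append, ← hBp, ← hA'p] at call3
    -- assemble
    obtain ⟨τ₂, hτ₂, v, hv, hτ₂v⟩ := Submodule.mem_sup.mp call3
    obtain ⟨r₂, hr₂, y₂, hy₂, hry⟩ := Submodule.mem_sup.mp hv
    rw [hH]
    have hqeq : q = τ + (x l₀ * τ₂ + x l₀ * r₂ + x l₀ * y₂) + r := by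
      rw [← hwr, ← hτs, ← hb, ← hτ₂v, ← hry]; ring
    rw [hqeq]
    refine add_mem (add_mem (Submodule.mem_sup_left hτ) ?_) (Submodule.mem_sup_right
      (Submodule.mem_sup_left hr))
    refine add_mem (add_mem (Submodule.mem_sup_left (Ideal.mul_mem_left _ _ hτ₂))
      (Submodule.mem_sup_right (Submodule.mem_sup_left (Ideal.mul_mem_left _ _ hr₂)))) ?_
    exact Submodule.mem_sup_right (Submodule.mem_sup_right (hmul y₂ hy₂))

end MainLemma

/-- Let `(Q,m)` be a noetherian local ring, `x₁,…,x_d ∈ m` a regular sequence on `Q`, and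
`f₁,…,f_n` monomials on `x` (with exponent vectors `a_j ≠ 0`). If for every `i < c` and every
`j ≠ i` the supports of `f_i` and `f_j` are disjoint, then `f₁,…,f_c` is a regular sequence on
`Q/(f_{c+1},…,f_n)`. -/
theorem monomials_regular_sequence_of_disjoint_supports
    {Q : Type*} [CommRing Q] [IsNoetherianRing Q] [IsLocalRing Q]
    {d n : ℕ} (x : Fin d → Q) (hxm : ∀ l, x l ∈ maximalIdeal Q)
    (hx : IsRegular Q (List.ofFn x))
    (a : Fin n → Fin d → ℕ) (ha : ∀ j, a j ≠ 0)
    (f : Fin n → Q) (hf : ∀ j, f j = ∏ l, x l ^ a j l)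
    (c : ℕ) (hc1 : 1 ≤ c) (hcn : c ≤ n)
    (hdisj : ∀ i j : Fin n, (i : ℕ) < c → j ≠ i → ∀ l, a i l = 0 ∨ a j l = 0) :
    IsRegular (Q ⧸ Ideal.span (f '' {j : Fin n | c ≤ (j : ℕ)}))
      (List.ofFn fun i : Fin c => f (Fin.castLE hcn i)) := by
  classical
  set I : Ideal Q := Ideal.span (f '' {j : Fin n | c ≤ (j : ℕ)}) with hI
  set gs : List Q := List.ofFn (fun i : Fin c => f (Fin.castLE hcn i)) with hgs
  have hfm : ∀ j, f j = auxMon x (a j) := fun j => (hf j).trans rfl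
  have hfmem : ∀ j, f j ∈ maximalIdeal Q := fun j => by
    obtain ⟨l, hl⟩ := Function.ne_iff.mp (ha j)
    have hl : a j l ≠ 0 := by simpa using hl
    rw [hfm j, auxMon_factor x hl]
    exact Ideal.mul_mem_right _ _ (hxm l)
  have hgslen : gs.length = c := by rw [hgs]; exact List.length_ofFn
  refine ⟨aux_isWeaklyRegular_quotient I gs ?_, ?_⟩
  · intro i hi q hq
    have hic : i < c := by rwa [hgslen] at hi
    set ii : Fin n := Fin.castLE hcn ⟨i, hic⟩ with hii
    have hiival : (ii : ℕ) = i := rfl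
    set J : List (Fin n) :=
      (List.finRange n).filter (fun j => decide (c ≤ (j : ℕ) ∨ (j : ℕ) < i)) with hJ
    have hmemJ : ∀ j : Fin n, j ∈ J ↔ (c ≤ (j : ℕ) ∨ (j : ℕ) < i) := fun j => by
      simp [hJ, List.mem_filter, List.mem_finRange]
    set HS : List (Fin d → ℕ) := J.map a with hHS
    have hgetelem : ∀ (k : ℕ) (hk : k < gs.length),
        gs[k] = f (Fin.castLE hcn ⟨k, by rwa [hgslen] at hk⟩) := fun k hk => by
      rw [List.getElem_of_eq hgs, List.getElem_ofFn]
    have hID : I ⊔ Ideal.ofList (gs.take i) = Ideal.ofList (HS.map (auxMon x)) := by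
      rw [hI]
      unfold Ideal.ofList
      rw [Ideal.span, Ideal.span, ← Submodule.span_union]
      congr 1
      ext r
      simp only [Set.mem_union, Set.mem_image, Set.mem_setOf_eq]
      constructor
      · rintro (⟨j, hj, rfl⟩ | hr)
        · refine List.mem_map.mpr ⟨a j, List.mem_map.mpr ⟨j, (hmemJ j).mpr (Or.inl hj), rfl⟩,
            (hfm j).symm⟩
        · obtain ⟨k, hk, rfl⟩ := List.mem_take_iff_getElem.mp hr
          have hki : k < i := lt_of_lt_of_le hk (min_le_left _ _)
          have hkc : k < c := lt_trans hki hic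
          have hklen : k < gs.length := by rwa [hgslen]
          rw [hgetelem k hklen]
          refine List.mem_map.mpr ⟨a _, List.mem_map.mpr ⟨Fin.castLE hcn ⟨k, _⟩,
            (hmemJ _).mpr (Or.inr hki), rfl⟩, (hfm _).symm⟩
      · intro hr
        obtain ⟨γ, hγ, rfl⟩ := List.mem_map.mp hr
        obtain ⟨j, hj, rfl⟩ := List.mem_map.mp hγ
        rcases (hmemJ j).mp hj with h | h
        · exact Or.inl ⟨j, h, hfm j⟩
        · refine Or.inr ?_
          have hjc : (j : ℕ) < c := lt_trans h hic
          have hjlen : (j : ℕ) < gs.length := by rwa [hgslen]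
          refine List.mem_take_iff_getElem.mpr ⟨(j : ℕ), lt_min h hjlen, ?_⟩
          rw [hgetelem (j : ℕ) hjlen, hfm]
          exact congrArg (auxMon x) (congrArg a (Fin.ext rfl))
    have key := aux_main hxm hx ((HS.map auxDeg).sum) [] HS (a ii) List.nodup_nil le_rfl
      (ha ii) (fun l hl => absurd hl List.not_mem_nil)
      (fun γ hγ l => by
        obtain ⟨j, hj, rfl⟩ := List.mem_map.mp hγ
        have hji : j ≠ ii := by
          rcases (hmemJ j).mp hj with h | h
          · exact fun hc' => by
              rw [hc'] at h
              rw [hiival] at h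
              omega
          · exact fun hc' => by
              rw [hc'] at h
              rw [hiival] at h
              omega
        exact (hdisj ii j (by rw [hiival]; exact hic) hji l).symm)
      (fun γ hγ l hl => absurd hl List.not_mem_nil) q
    rw [List.map_nil, Ideal.ofList_nil, bot_sup_eq] at key
    rw [hID]
    apply key
    rw [hID] at hq
    rwa [hgetelem i hi, hfm] at hq
  · intro htop
    have h1 : ((Submodule.Quotient.mk 1 : Q ⧸ I)) ∈
        (Ideal.ofList gs • ⊤ : Submodule Q (Q ⧸ I)) := by
      rw [← htop]; trivial
    have h2 : (1 : Q) ∈ I ⊔ Ideal.ofList gs := (aux_mem_smul_top_iff I _ 1).mp h1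
    have h3 : I ⊔ Ideal.ofList gs ≤ maximalIdeal Q := by
      refine sup_le ?_ ?_
      · rw [hI]
        refine Ideal.span_le.mpr ?_
        rintro r ⟨j, -, rfl⟩
        exact hfmem j
      · refine Ideal.span_le.mpr ?_
        intro r hr
        obtain ⟨k, rfl⟩ := List.mem_ofFn.mp (by rwa [hgs] at hr)
        exact hfmem _
    exact (IsLocalRing.maximalIdeal.isMaximal Q).ne_top (Ideal.eq_top_iff_one _ |>.mpr (h3 h2))
end

section
/- Let (Q,m) be a regular local ring, let x₁,…,x_d ∈ m be a regular sequence on Q, and let f₁,…,f_n be monomials on x (each f_j = ∏_l x_l^{(a_j)_l} with a_j ∈ ℕ^d, a_j ≠ 0) generating the ideal I = (f₁,…,f_n). If j₁ < ⋯ < j_i are indices in {1,…,n} with i > height(I), then there exist s < t in {1,…,i} such that the supports of f_{j_s} and f_{j_t} intersect; equivalently, any subfamily of f₁,…,f_n with pairwise disjoint supports has at most height(I) members. -/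
open RingTheory.Sequence IsLocalRing

/-- Any element of a minimal prime of a commutative ring is a zerodivisor. -/
lemma not_isSMulRegular_of_mem_minimalPrimes {R : Type*} [CommRing R]
    {p : Ideal R} (hp : p ∈ minimalPrimes R) {b : R} (hb : b ∈ p) :
    ¬ IsSMulRegular R b := by
  intro hreg
  haveI : p.IsPrime := hp.1.1
  have hnil : IsNilpotent (algebraMap R (Localization p.primeCompl) b) := by
    haveI := Ring.KrullDimLE.of_isLocalization p hp (Localization p.primeCompl)
    rw [Ring.KrullDimLE.isNilpotent_iff_mem_maximalIdeal]
    exact (IsLocalization.AtPrime.to_map_mem_maximal_iff _ p b).mpr hb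
  obtain ⟨m, hm⟩ := hnil
  rw [← map_pow] at hm
  obtain ⟨s, hs⟩ := (IsLocalization.map_eq_zero_iff p.primeCompl _ _).mp hm
  have hs0 : (s : R) = 0 := by
    apply hreg.pow m
    simpa [smul_eq_mul, mul_comm] using hs
  exact s.2 (hs0 ▸ p.zero_mem)

/-- Any element of a prime minimal over an ideal `J` is a zerodivisor modulo `J`. -/
lemma not_isSMulRegular_quot_of_mem_minimalPrimes {R : Type*} [CommRing R]
    {J q : Ideal R} (hq : q ∈ J.minimalPrimes) {y : R} (hy : y ∈ q) :
    ¬ IsSMulRegular (R ⧸ J) y := by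
  intro hreg
  rw [Ideal.minimalPrimes_eq_comap] at hq
  obtain ⟨q', hq', rfl⟩ := hq
  have hy' : Ideal.Quotient.mk J y ∈ q' := hy
  refine not_isSMulRegular_of_mem_minimalPrimes hq' hy' ?_
  intro m m' h
  apply hreg
  show y • m = y • m'
  have e : ∀ z : R ⧸ J, y • z = Ideal.Quotient.mk J y * z := by
    intro z
    obtain ⟨r, rfl⟩ := Ideal.Quotient.mk_surjective z
    rw [← map_mul, ← smul_eq_mul (α := R)]
    rfl
  rw [e, e]
  exact h

/-- A prime containing a weakly regular sequence of length `k` has height at least `k`: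
one may build a chain of primes below it with `qᵢ` minimal over the first `i` terms. -/
lemma length_le_height_of_isWeaklyRegular {R : Type*} [CommRing R]
    (L : List R) (hL : IsWeaklyRegular R L)
    (p : PrimeSpectrum R) (hmem : ∀ y ∈ L, y ∈ p.asIdeal) :
    ∃ q : PrimeSpectrum R, q.asIdeal ∈ (Ideal.ofList L).minimalPrimes ∧ q ≤ p ∧
      (L.length : ℕ∞) ≤ Order.height q := by
  induction L using List.reverseRecOn generalizing p with
  | nil =>
    obtain ⟨q, hq, hqle⟩ := Ideal.exists_minimalPrimes_le (bot_le (a := p.asIdeal))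
    haveI := hq.1.1
    refine ⟨⟨q, hq.1.1⟩, by simpa using hq, hqle, by simp⟩
  | append_singleton L' y ih =>
    have hspan : Ideal.ofList (L' ++ [y]) ≤ p.asIdeal :=
      Ideal.span_le.mpr (fun r hr => hmem r hr)
    obtain ⟨q0, hq0, hq0le⟩ := Ideal.exists_minimalPrimes_le hspan
    haveI hq0p : q0.IsPrime := hq0.1.1
    rw [isWeaklyRegular_append_iff] at hL
    obtain ⟨h1, h2⟩ := hL
    rw [isWeaklyRegular_singleton_iff] at h2
    have hsm : (Ideal.ofList L' • ⊤ : Submodule R R) = Ideal.ofList L' := by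
      rw [smul_eq_mul, Ideal.mul_top]
    rw [hsm] at h2
    obtain ⟨q', hq'min, hq'le, hq'ht⟩ := ih h1 ⟨q0, hq0p⟩
      (fun z hz => hq0.1.2 (Ideal.subset_span (by simp [hz])))
    have hynot : y ∉ q'.asIdeal := fun hy =>
      not_isSMulRegular_quot_of_mem_minimalPrimes hq'min hy h2
    have hyq0 : y ∈ q0 := hq0.1.2 (Ideal.subset_span (by simp))
    have hlt : q' < ⟨q0, hq0p⟩ := lt_of_le_of_ne hq'le (fun h => hynot (h ▸ hyq0))
    refine ⟨⟨q0, hq0p⟩, hq0, hq0le, ?_⟩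
    have : Order.height q' + 1 ≤ Order.height (⟨q0, hq0p⟩ : PrimeSpectrum R) := by
      rw [Order.height_eq_iSup_lt_height (⟨q0, hq0p⟩ : PrimeSpectrum R)]
      exact le_iSup₂_of_le q' hlt le_rfl
    calc ((L' ++ [y]).length : ℕ∞) = (L'.length : ℕ∞) + 1 := by simp
      _ ≤ Order.height q' + 1 := by gcongr
      _ ≤ _ := this

/-- `Q` is a regular local ring: its maximal ideal is generated by `dim Q` many elements. -/
def IsRegularLocal (Q : Type*) [CommRing Q] [IsNoetherianRing Q] [IsLocalRing Q] : Prop :=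
  ∃ s : Finset Q, Ideal.span (s : Set Q) = maximalIdeal Q ∧
    (s.card : WithBot (WithTop ℕ)) = ringKrullDim Q

/-- The height of an ideal: the infimum of the heights of the prime ideals containing it. -/
noncomputable def idealHeight {Q : Type*} [CommRing Q] (I : Ideal Q) : ℕ∞ :=
  ⨅ (p : PrimeSpectrum Q) (_ : I ≤ p.asIdeal), Order.height p

/-- Let `(Q,m)` be a regular local ring and `f₁,…,f_n` monomials on a regular sequence
`x₁,…,x_d ∈ m`, generating `I = (f₁,…,f_n)`. Given indices `j₁ < ⋯ < j_i` with
`i > height I`, two of the corresponding monomials have intersecting supports; equivalently,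
any subfamily of `f₁,…,f_n` with pairwise disjoint supports has at most `height I` members. -/
theorem monomials_with_disjoint_supports_le_height
    {Q : Type*} [CommRing Q] [IsNoetherianRing Q] [IsLocalRing Q]
    (hQ : IsRegularLocal Q)
    {d n : ℕ} (x : Fin d → Q) (hxm : ∀ l, x l ∈ maximalIdeal Q)
    (hx : IsRegular Q (List.ofFn x))
    (a : Fin n → Fin d → ℕ) (ha : ∀ j, a j ≠ 0)
    (f : Fin n → Q) (hf : ∀ j, f j = ∏ l, x l ^ a j l)
    (I : Ideal Q) (hI : I = Ideal.span (Set.range f)) :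
    (∀ (i : ℕ) (j : Fin i → Fin n), StrictMono j → idealHeight I < (i : ℕ∞) →
      ∃ s t : Fin i, s < t ∧ ∃ l, a (j s) l ≠ 0 ∧ a (j t) l ≠ 0) ∧
    (∀ s : Finset (Fin n),
      (∀ i ∈ s, ∀ j ∈ s, i ≠ j → ∀ l, a i l = 0 ∨ a j l = 0) →
      (s.card : ℕ∞) ≤ idealHeight I) := by
  have key : ∀ s : Finset (Fin n),
      (∀ i ∈ s, ∀ j ∈ s, i ≠ j → ∀ l, a i l = 0 ∨ a j l = 0) →
      (s.card : ℕ∞) ≤ idealHeight I := by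
    intro s hdisj
    haveI : IsNoetherian Q Q := isNoetherianRing_iff.mp ‹_›
    rw [idealHeight]
    refine le_iInf fun p => le_iInf fun hIp => ?_
    haveI hp : p.asIdeal.IsPrime := p.2
    -- for each j ∈ s, find a variable index in the support of `f j` with `x l ∈ p`
    have hwit : ∀ j ∈ s, ∃ l, a j l ≠ 0 ∧ x l ∈ p.asIdeal := by
      intro j hj
      have hfj : f j ∈ p.asIdeal := hIp (hI ▸ Ideal.subset_span ⟨j, rfl⟩)
      rw [hf j, Ideal.IsPrime.prod_mem_iff] at hfj
      obtain ⟨l, -, hl⟩ := hfj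
      rcases Nat.eq_zero_or_pos (a j l) with h0 | h0
      · rw [h0, pow_zero] at hl
        exact absurd (p.asIdeal.eq_top_iff_one.mpr hl) hp.ne_top
      · exact ⟨l, h0.ne', (hp.pow_mem_iff_mem _ h0).mp hl⟩
    choose ℓ hℓ0 hℓp using hwit
    classical
    set T : Finset (Fin d) := s.attach.image (fun j => ℓ j.1 j.2) with hT
    have hinj : Set.InjOn (fun (j : {j // j ∈ s}) => ℓ j.1 j.2) s.attach := by
      intro u _ v _ huv
      by_contra hne
      have hne' : u.1 ≠ v.1 := fun h => hne (Subtype.ext h)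
      rcases hdisj u.1 u.2 v.1 v.2 hne' (ℓ u.1 u.2) with h | h
      · exact hℓ0 u.1 u.2 h
      · simp only at huv
        exact hℓ0 v.1 v.2 (huv ▸ h)
    have hcard : T.card = s.card := by
      rw [hT, Finset.card_image_of_injOn hinj, Finset.card_attach]
    -- the list of chosen variables
    set L : List Q := (T.sort (· ≤ ·)).map x with hL
    have hlen : L.length = s.card := by
      rw [hL, List.length_map, Finset.length_sort, hcard]
    -- the chosen variables, followed by the remaining ones, form a permutation of all
    have hperm : List.Perm (List.finRange d) (T.sort (· ≤ ·) ++ Tᶜ.sort (· ≤ ·)) := by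
      apply List.perm_of_nodup_nodup_toFinset_eq (List.nodup_finRange d)
      · refine List.Nodup.append (Finset.sort_nodup _ _) (Finset.sort_nodup _ _) ?_
        intro z hz hz'
        rw [Finset.mem_sort] at hz hz'
        exact absurd hz (by simpa using hz')
      · ext z
        simp [List.mem_append, Finset.mem_sort, em]
    have hreg2 : IsRegular Q ((T.sort (· ≤ ·) ++ Tᶜ.sort (· ≤ ·)).map x) := by
      refine IsLocalRing.isRegular_of_perm ?_ (hperm.map x)
      rwa [← List.ofFn_eq_map]
    have hwreg : IsWeaklyRegular Q L := by
      have := hreg2.toIsWeaklyRegular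
      rw [List.map_append, isWeaklyRegular_append_iff] at this
      exact this.1
    have hmem : ∀ z ∈ L, z ∈ p.asIdeal := by
      intro z hz
      rw [hL, List.mem_map] at hz
      obtain ⟨l, hl, rfl⟩ := hz
      rw [Finset.mem_sort, hT, Finset.mem_image] at hl
      obtain ⟨j, -, rfl⟩ := hl
      exact hℓp j.1 j.2
    obtain ⟨q, -, hqle, hqht⟩ := length_le_height_of_isWeaklyRegular L hwreg p hmem
    calc (s.card : ℕ∞) = (L.length : ℕ∞) := by rw [hlen]
      _ ≤ Order.height q := hqht
      _ ≤ Order.height p := Order.height_mono hqle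
  refine ⟨?_, key⟩
  intro i j hmono hlt
  by_contra hcon
  push_neg at hcon
  classical
  set S : Finset (Fin n) := Finset.image j Finset.univ with hS
  have hScard : S.card = i := by
    rw [hS, Finset.card_image_of_injective _ hmono.injective, Finset.card_univ,
      Fintype.card_fin]
  have hSdisj : ∀ u ∈ S, ∀ v ∈ S, u ≠ v → ∀ l, a u l = 0 ∨ a v l = 0 := by
    intro u hu v hv huv l
    rw [hS, Finset.mem_image] at hu hv
    obtain ⟨su, -, rfl⟩ := hu
    obtain ⟨sv, -, rfl⟩ := hv
    have hsne : su ≠ sv := fun h => huv (h ▸ rfl)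
    rcases lt_or_gt_of_ne hsne with h | h
    · by_cases h1 : a (j su) l = 0
      · exact Or.inl h1
      · exact Or.inr (hcon su sv h l h1)
    · by_cases h2 : a (j sv) l = 0
      · exact Or.inr h2
      · exact Or.inl (hcon sv su h l h2)
  have := key S hSdisj
  rw [hScard] at this
  exact absurd hlt (not_lt.mpr this)
end

section
/- Let Q be a commutative ring, x₁,…,x_d ∈ Q, and a₁,…,a_n ∈ ℕ^d. For J ⊆ {1,…,n} let a_J ∈ ℕ^d be the coordinatewise maximum of {a_j : j ∈ J} (with a_∅ = 0). Let T be the free Q-module with basis {b_J : J ⊆ {1,…,n}}, equipped with the Q-bilinear product determined by b_J · b_K = sgn(J,K) · (∏_{l=1}^d x_l^{(a_J)_l + (a_K)_l − (a_{J∪K})_l}) · b_{J∪K} when J ∩ K = ∅, and b_J · b_K = 0 when J ∩ K ≠ ∅. Then this product is associative: (b_J · b_K) · b_L = b_J · (b_K · b_L) for all J, K, L ⊆ {1,…,n}, and b_∅ is a two-sided identity. -/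
/-- `sgn J L = (−1)^{|{(j,ℓ) ∈ J×L : j > ℓ}|}` if `J` and `L` are disjoint, and `0` otherwise. -/
def taylorSgn {n : ℕ} (J L : Finset (Fin n)) : ℤ :=
  if Disjoint J L then (-1) ^ (((J ×ˢ L).filter fun p => p.2 < p.1).card) else 0

/-- `a_J`, the coordinatewise maximum of `{a_j : j ∈ J}` (with `a_∅ = 0`). -/
def maxExp {n d : ℕ} (a : Fin n → Fin d → ℕ) (J : Finset (Fin n)) : Fin d → ℕ :=
  fun l => J.sup fun j => a j l

private lemma myCardUnionL {n : ℕ} (J K L : Finset (Fin n)) (h : Disjoint J K) :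
    (((J ∪ K) ×ˢ L).filter fun p => p.2 < p.1).card
      = ((J ×ˢ L).filter fun p => p.2 < p.1).card
        + ((K ×ˢ L).filter fun p => p.2 < p.1).card := by
  rw [Finset.union_product, Finset.filter_union, Finset.card_union_of_disjoint]
  exact Finset.disjoint_filter_filter (Finset.disjoint_product.mpr (Or.inl h))

private lemma myCardUnionR {n : ℕ} (J K L : Finset (Fin n)) (h : Disjoint K L) :
    ((J ×ˢ (K ∪ L)).filter fun p => p.2 < p.1).card
      = ((J ×ˢ K).filter fun p => p.2 < p.1).card
        + ((J ×ˢ L).filter fun p => p.2 < p.1).card := by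
  rw [Finset.product_union, Finset.filter_union, Finset.card_union_of_disjoint]
  exact Finset.disjoint_filter_filter (Finset.disjoint_product.mpr (Or.inr h))

private lemma mySgn {n : ℕ} (J K L : Finset (Fin n)) (hJK : Disjoint J K)
    (hJL : Disjoint J L) (hKL : Disjoint K L) :
    taylorSgn J K * taylorSgn (J ∪ K) L = taylorSgn K L * taylorSgn J (K ∪ L) := by
  have h1 : Disjoint (J ∪ K) L := Finset.disjoint_union_left.mpr ⟨hJL, hKL⟩
  have h2 : Disjoint J (K ∪ L) := Finset.disjoint_union_right.mpr ⟨hJK, hJL⟩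
  simp only [taylorSgn, if_pos hJK, if_pos hKL, if_pos h1, if_pos h2,
    myCardUnionL J K L hJK, myCardUnionR J K L hKL, ← pow_add]
  ring_nf

private lemma myExp {n d : ℕ} (a : Fin n → Fin d → ℕ) (J K L : Finset (Fin n)) (l : Fin d) :
    (maxExp a J l + maxExp a K l - maxExp a (J ∪ K) l)
      + (maxExp a (J ∪ K) l + maxExp a L l - maxExp a (J ∪ (K ∪ L)) l)
    = (maxExp a K l + maxExp a L l - maxExp a (K ∪ L) l)
      + (maxExp a J l + maxExp a (K ∪ L) l - maxExp a (J ∪ (K ∪ L)) l) := by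
  simp only [maxExp, Finset.sup_union, Finset.union_assoc]
  generalize (J.sup fun j => a j l) = p
  generalize (K.sup fun j => a j l) = q
  generalize (L.sup fun j => a j l) = r
  omega

/-- Let `T` be the free `Q`-module on basis `{b_J : J ⊆ [n]}`, equipped with the `Q`-bilinear
product determined by
`b_J · b_K = sgn(J,K) · (∏_l x_l^{(a_J)_l + (a_K)_l − (a_{J∪K})_l}) · b_{J∪K}` when
`J ∩ K = ∅`, and `b_J · b_K = 0` otherwise. Then the product is associative and `b_∅` is a
two-sided identity. -/
theorem taylor_product_assoc_and_one {Q : Type*} [CommRing Q] {n d : ℕ}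
    (x : Fin d → Q) (a : Fin n → Fin d → ℕ)
    (mul : (Finset (Fin n) →₀ Q) →ₗ[Q] (Finset (Fin n) →₀ Q) →ₗ[Q] (Finset (Fin n) →₀ Q))
    (hmul : ∀ J K : Finset (Fin n), mul (Finsupp.single J 1) (Finsupp.single K 1) =
      if Disjoint J K then
        Finsupp.single (J ∪ K)
          ((taylorSgn J K : Q) * ∏ l, x l ^ (maxExp a J l + maxExp a K l - maxExp a (J ∪ K) l))
      else 0) :
    (∀ J K L : Finset (Fin n),
        mul (mul (Finsupp.single J 1) (Finsupp.single K 1)) (Finsupp.single L 1) =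
          mul (Finsupp.single J 1) (mul (Finsupp.single K 1) (Finsupp.single L 1))) ∧
    (∀ t : Finset (Fin n) →₀ Q,
        mul (Finsupp.single (∅ : Finset (Fin n)) 1) t = t ∧
        mul t (Finsupp.single (∅ : Finset (Fin n)) 1) = t) := by
  have hsingle : ∀ (S : Finset (Fin n)) (c : Q),
      Finsupp.single S c = c • Finsupp.single S (1 : Q) := by
    intro S c; rw [Finsupp.smul_single, smul_eq_mul, mul_one]
  have hml : ∀ (S : Finset (Fin n)) (c : Q) (t : Finset (Fin n) →₀ Q),
      mul (Finsupp.single S c) t = c • mul (Finsupp.single S 1) t := by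
    intro S c t; rw [hsingle S c, map_smul, LinearMap.smul_apply]
  have hmr : ∀ (t : Finset (Fin n) →₀ Q) (S : Finset (Fin n)) (c : Q),
      mul t (Finsupp.single S c) = c • mul t (Finsupp.single S 1) := by
    intro t S c; rw [hsingle S c, map_smul]
  constructor
  · intro J K L
    by_cases hJK : Disjoint J K
    · by_cases hKL : Disjoint K L
      · by_cases hJL : Disjoint J L
        · -- main case: all pairwise disjoint
          have h1 : Disjoint (J ∪ K) L := Finset.disjoint_union_left.mpr ⟨hJL, hKL⟩
          have h2 : Disjoint J (K ∪ L) := Finset.disjoint_union_right.mpr ⟨hJK, hJL⟩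
          rw [hmul J K, if_pos hJK, hmul K L, if_pos hKL, hml (J ∪ K), hmr _ (K ∪ L),
            hmul (J ∪ K) L, if_pos h1, hmul J (K ∪ L), if_pos h2,
            Finsupp.smul_single, Finsupp.smul_single, Finset.union_assoc]
          congr 1
          have hx : ∀ (α β : Fin d → ℕ),
              (∏ l, x l ^ α l) * (∏ l, x l ^ β l) = ∏ l, x l ^ (α l + β l) := by
            intro α β; rw [← Finset.prod_mul_distrib]; simp [pow_add]
          rw [smul_eq_mul, smul_eq_mul]
          calc ((taylorSgn J K : Q) * _) * ((taylorSgn (J ∪ K) L : Q) * _)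
              = ((taylorSgn J K * taylorSgn (J ∪ K) L : ℤ) : Q)
                * ((∏ l, x l ^ (maxExp a J l + maxExp a K l - maxExp a (J ∪ K) l))
                  * (∏ l, x l ^ (maxExp a (J ∪ K) l + maxExp a L l
                      - maxExp a (J ∪ (K ∪ L)) l))) := by push_cast; ring
            _ = ((taylorSgn K L * taylorSgn J (K ∪ L) : ℤ) : Q)
                * ((∏ l, x l ^ (maxExp a K l + maxExp a L l - maxExp a (K ∪ L) l))
                  * (∏ l, x l ^ (maxExp a J l + maxExp a (K ∪ L) l
                      - maxExp a (J ∪ (K ∪ L)) l))) := by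
                rw [mySgn J K L hJK hJL hKL, hx, hx]
                congr 1
                exact Finset.prod_congr rfl fun l _ => by rw [myExp a J K L l]
            _ = ((taylorSgn K L : Q) * _) * ((taylorSgn J (K ∪ L) : Q) * _) := by
                push_cast; ring
        · -- ¬ Disjoint J L
          have h1 : ¬ Disjoint (J ∪ K) L := fun h =>
            hJL (Finset.disjoint_union_left.mp h).1
          have h2 : ¬ Disjoint J (K ∪ L) := fun h =>
            hJL (Finset.disjoint_union_right.mp h).2
          rw [hmul J K, if_pos hJK, hmul K L, if_pos hKL, hml (J ∪ K), hmr _ (K ∪ L),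
            hmul (J ∪ K) L, if_neg h1, hmul J (K ∪ L), if_neg h2, smul_zero,
            smul_zero]
      · -- ¬ Disjoint K L
        have h1 : ¬ Disjoint (J ∪ K) L := fun h =>
          hKL (Finset.disjoint_union_left.mp h).2
        rw [hmul J K, if_pos hJK, hmul K L, if_neg hKL, hml,
          hmul (J ∪ K) L, if_neg h1, smul_zero, map_zero]
    · -- ¬ Disjoint J K
      have h2 : ¬ Disjoint J (K ∪ L) := fun h =>
        hJK (Finset.disjoint_union_right.mp h).1
      rw [hmul J K, if_neg hJK, map_zero, LinearMap.zero_apply]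
      by_cases hKL : Disjoint K L
      · rw [hmul K L, if_pos hKL, hmr, hmul J (K ∪ L), if_neg h2, smul_zero]
      · rw [hmul K L, if_neg hKL, map_zero]
  · have hl : mul (Finsupp.single (∅ : Finset (Fin n)) 1) = LinearMap.id := by
      ext J
      simp [hmul, maxExp, taylorSgn]
    have hr : mul.flip (Finsupp.single (∅ : Finset (Fin n)) 1) = LinearMap.id := by
      ext J
      simp [LinearMap.flip_apply, hmul, maxExp, taylorSgn]
    intro t
    constructor
    · rw [hl]; rfl
    · have := congrFun (congrArg (fun f => f.toFun) hr) t
      simpa [LinearMap.flip_apply] using this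
end

section
/- Let Q be a commutative ring, x₁,…,x_d ∈ Q, and a₁,…,a_n ∈ ℕ^d. For J ⊆ {1,…,n} let a_J ∈ ℕ^d be the coordinatewise maximum of {a_j : j ∈ J} (with a_∅ = 0), and for J' ⊆ J set f_{J/J'} := ∏_{l=1}^d x_l^{(a_J)_l − (a_{J'})_l}. Let T be the free Q-module with basis {b_J : J ⊆ {1,…,n}}, with Q-linear differential ∂(b_J) = Σ_{i∈J} sgn({i}, J∖{i}) · f_{J/(J∖{i})} · b_{J∖{i}} and Q-bilinear product b_J · b_K = sgn(J,K) · (∏_l x_l^{(a_J)_l + (a_K)_l − (a_{J∪K})_l}) · b_{J∪K} for J ∩ K = ∅ and b_J · b_K = 0 otherwise. Then the Leibniz rule holds: ∂(b_J · b_K) = ∂(b_J) · b_K + (−1)^{|J|} b_J · ∂(b_K) for all J, K ⊆ {1,…,n}. -/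
/-- `f_{J/J'} = ∏_l x_l ^ ((a_J)_l − (a_{J'})_l)`. -/
def quotMonomial {Q : Type*} [CommRing Q] {n d : ℕ} (x : Fin d → Q)
    (a : Fin n → Fin d → ℕ) (J J' : Finset (Fin n)) : Q :=
  ∏ l, x l ^ (maxExp a J l - maxExp a J' l)

lemma taylorSgn_union_right {n : ℕ} (A B C : Finset (Fin n)) (hBC : Disjoint B C) :
    taylorSgn A (B ∪ C) = taylorSgn A B * taylorSgn A C := by
  unfold taylorSgn
  by_cases h : Disjoint A (B ∪ C)
  · rw [Finset.disjoint_union_right] at h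
    rw [if_pos (Finset.disjoint_union_right.mpr h), if_pos h.1, if_pos h.2, ← pow_add]
    congr 1
    rw [Finset.product_union, Finset.filter_union, Finset.card_union_of_disjoint]
    rw [Finset.disjoint_left]
    intro p hp1 hp2
    simp only [Finset.mem_filter, Finset.mem_product] at hp1 hp2
    exact Finset.disjoint_left.mp hBC hp1.1.2 hp2.1.2
  · rw [if_neg h]
    rw [Finset.disjoint_union_right, not_and_or] at h
    rcases h with h | h <;> rw [if_neg h] <;> ring

lemma taylorSgn_union_left {n : ℕ} (A B C : Finset (Fin n)) (hAB : Disjoint A B) :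
    taylorSgn (A ∪ B) C = taylorSgn A C * taylorSgn B C := by
  unfold taylorSgn
  by_cases h : Disjoint (A ∪ B) C
  · rw [Finset.disjoint_union_left] at h
    rw [if_pos (Finset.disjoint_union_left.mpr h), if_pos h.1, if_pos h.2, ← pow_add]
    congr 1
    rw [Finset.union_product, Finset.filter_union, Finset.card_union_of_disjoint]
    rw [Finset.disjoint_left]
    intro p hp1 hp2
    simp only [Finset.mem_filter, Finset.mem_product] at hp1 hp2
    exact Finset.disjoint_left.mp hAB hp1.1.1 hp2.1.1
  · rw [if_neg h]
    rw [Finset.disjoint_union_left, not_and_or] at h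
    rcases h with h | h <;> rw [if_neg h] <;> ring

lemma taylorSgn_sq {n : ℕ} (A B : Finset (Fin n)) (h : Disjoint A B) :
    taylorSgn A B * taylorSgn A B = 1 := by
  unfold taylorSgn
  rw [if_pos h, ← pow_add]
  exact Even.neg_one_pow ⟨_, rfl⟩

lemma taylorSgn_swap {n : ℕ} (A B : Finset (Fin n)) (h : Disjoint A B) :
    taylorSgn A B * taylorSgn B A = (-1) ^ (A.card * B.card) := by
  unfold taylorSgn
  rw [if_pos h, if_pos h.symm, ← pow_add]
  congr 1
  have h1 : ((B ×ˢ A).filter fun p => p.2 < p.1).card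
      = ((A ×ˢ B).filter fun p => p.1 < p.2).card := by
    apply Finset.card_nbij (fun p => p.swap)
    · intro p hp
      simp only [Finset.mem_coe, Finset.mem_filter, Finset.mem_product] at hp ⊢
      exact ⟨⟨hp.1.2, hp.1.1⟩, hp.2⟩
    · intro p _ q _ hpq
      exact Prod.swap_injective hpq
    · intro p hp
      refine ⟨p.swap, ?_, Prod.swap_swap p⟩
      simp only [Finset.mem_coe, Finset.mem_filter, Finset.mem_product] at hp ⊢
      exact ⟨⟨hp.1.2, hp.1.1⟩, hp.2⟩
  rw [h1]
  have h2 : (A ×ˢ B).filter (fun p => p.1 < p.2) = (A ×ˢ B).filter fun p => ¬ p.2 < p.1 := by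
    apply Finset.filter_congr
    intro p hp
    simp only [Finset.mem_product] at hp
    have hne : p.1 ≠ p.2 := fun e => Finset.disjoint_left.mp h hp.1 (e ▸ hp.2)
    constructor
    · exact fun h' => asymm h'
    · intro h'; exact (lt_or_gt_of_ne hne).resolve_right h'
  rw [h2, Finset.card_filter_add_card_filter_not, Finset.card_product]

lemma maxExp_union {n d : ℕ} (a : Fin n → Fin d → ℕ) (A B : Finset (Fin n)) (l : Fin d) :
    maxExp a (A ∪ B) l = max (maxExp a A l) (maxExp a B l) := by
  simp [maxExp, Finset.sup_union]

lemma maxExp_erase {n d : ℕ} (a : Fin n → Fin d → ℕ) {J : Finset (Fin n)} {i : Fin n}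
    (hi : i ∈ J) (l : Fin d) :
    maxExp a J l = max (a i l) (maxExp a (J.erase i) l) := by
  conv_lhs => rw [show J = insert i (J.erase i) from (Finset.insert_erase hi).symm]
  simp [maxExp, Finset.sup_insert]

lemma prodPow {Q : Type*} [CommRing Q] {d : ℕ} (x : Fin d → Q) (e f g h : Fin d → ℕ)
    (key : ∀ l, e l + f l = g l + h l) :
    (∏ l, x l ^ e l) * (∏ l, x l ^ f l) = (∏ l, x l ^ g l) * (∏ l, x l ^ h l) := by
  rw [← Finset.prod_mul_distrib, ← Finset.prod_mul_distrib]
  exact Finset.prod_congr rfl fun l _ => by rw [← pow_add, ← pow_add, key l]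

lemma monoJ {Q : Type*} [CommRing Q] {n d : ℕ} (x : Fin d → Q) (a : Fin n → Fin d → ℕ)
    {J K : Finset (Fin n)} {i : Fin n} (hi : i ∈ J) (hiK : i ∉ K) :
    (∏ l, x l ^ (maxExp a J l + maxExp a K l - maxExp a (J ∪ K) l)) *
      quotMonomial x a (J ∪ K) ((J ∪ K).erase i)
    = quotMonomial x a J (J.erase i) *
      ∏ l, x l ^ (maxExp a (J.erase i) l + maxExp a K l - maxExp a (J.erase i ∪ K) l) := by
  unfold quotMonomial
  apply prodPow
  intro l
  have e1 : (J ∪ K).erase i = J.erase i ∪ K := by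
    rw [Finset.erase_union_distrib, Finset.erase_eq_of_notMem hiK]
  have h1 := maxExp_erase a hi l
  have h2 := maxExp_union a J K l
  have h3 := maxExp_union a (J.erase i) K l
  rw [e1]
  omega

lemma monoK {Q : Type*} [CommRing Q] {n d : ℕ} (x : Fin d → Q) (a : Fin n → Fin d → ℕ)
    {J K : Finset (Fin n)} {k : Fin n} (hk : k ∈ K) (hkJ : k ∉ J) :
    (∏ l, x l ^ (maxExp a J l + maxExp a K l - maxExp a (J ∪ K) l)) *
      quotMonomial x a (J ∪ K) ((J ∪ K).erase k)
    = quotMonomial x a K (K.erase k) *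
      ∏ l, x l ^ (maxExp a J l + maxExp a (K.erase k) l - maxExp a (J ∪ K.erase k) l) := by
  unfold quotMonomial
  apply prodPow
  intro l
  have e1 : (J ∪ K).erase k = J ∪ K.erase k := by
    rw [Finset.erase_union_distrib, Finset.erase_eq_of_notMem hkJ]
  have h1 := maxExp_erase a hk l
  have h2 := maxExp_union a J K l
  have h3 := maxExp_union a J (K.erase k) l
  rw [e1]
  omega

lemma monoC {Q : Type*} [CommRing Q] {n d : ℕ} (x : Fin d → Q) (a : Fin n → Fin d → ℕ)
    {J K : Finset (Fin n)} {i : Fin n} (hiJ : i ∈ J) (hiK : i ∈ K) :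
    quotMonomial x a J (J.erase i) *
      (∏ l, x l ^ (maxExp a (J.erase i) l + maxExp a K l - maxExp a (J.erase i ∪ K) l))
    = quotMonomial x a K (K.erase i) *
      ∏ l, x l ^ (maxExp a J l + maxExp a (K.erase i) l - maxExp a (J ∪ K.erase i) l) := by
  unfold quotMonomial
  apply prodPow
  intro l
  have h1 := maxExp_erase a hiJ l
  have h2 := maxExp_erase a hiK l
  have h3 := maxExp_union a (J.erase i) K l
  have h4 := maxExp_union a J (K.erase i) l
  omega

lemma signJ {n : ℕ} {J K : Finset (Fin n)} {i : Fin n} (hd : Disjoint J K) (hi : i ∈ J) :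
    taylorSgn J K * taylorSgn {i} ((J ∪ K).erase i)
      = taylorSgn {i} (J.erase i) * taylorSgn (J.erase i) K := by
  have hiK : i ∉ K := Finset.disjoint_left.mp hd hi
  have e1 : (J ∪ K).erase i = J.erase i ∪ K := by
    rw [Finset.erase_union_distrib, Finset.erase_eq_of_notMem hiK]
  have hdJeK : Disjoint (J.erase i) K := hd.mono_left (Finset.erase_subset _ _)
  have hdiJe : Disjoint ({i} : Finset (Fin n)) (J.erase i) := by
    simp [Finset.disjoint_singleton_left]
  have hdiK : Disjoint ({i} : Finset (Fin n)) K := by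
    simp [Finset.disjoint_singleton_left, hiK]
  have h1 : taylorSgn J K = taylorSgn {i} K * taylorSgn (J.erase i) K := by
    conv_lhs => rw [show J = {i} ∪ J.erase i by
      rw [← Finset.insert_eq, Finset.insert_erase hi]]
    exact taylorSgn_union_left _ _ _ hdiJe
  have h2 : taylorSgn {i} ((J ∪ K).erase i)
      = taylorSgn {i} (J.erase i) * taylorSgn {i} K := by
    rw [e1]; exact taylorSgn_union_right _ _ _ hdJeK
  have h3 := taylorSgn_sq {i} K hdiK
  rw [h1, h2]
  linear_combination (taylorSgn {i} (J.erase i) * taylorSgn (J.erase i) K) * h3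

lemma signK {n : ℕ} {J K : Finset (Fin n)} {k : Fin n} (hd : Disjoint J K) (hk : k ∈ K) :
    taylorSgn J K * taylorSgn {k} ((J ∪ K).erase k)
      = (-1) ^ J.card * (taylorSgn {k} (K.erase k) * taylorSgn J (K.erase k)) := by
  have hkJ : k ∉ J := Finset.disjoint_right.mp hd hk
  have e1 : (J ∪ K).erase k = J ∪ K.erase k := by
    rw [Finset.erase_union_distrib, Finset.erase_eq_of_notMem hkJ]
  have hdJKe : Disjoint J (K.erase k) := hd.mono_right (Finset.erase_subset _ _)
  have hdKek : Disjoint (K.erase k) ({k} : Finset (Fin n)) := by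
    simp [Finset.disjoint_singleton_right]
  have hdJk : Disjoint J ({k} : Finset (Fin n)) := by
    simp [Finset.disjoint_singleton_right, hkJ]
  have h1 : taylorSgn J K = taylorSgn J (K.erase k) * taylorSgn J {k} := by
    conv_lhs => rw [show K = K.erase k ∪ {k} by
      rw [Finset.union_comm, ← Finset.insert_eq, Finset.insert_erase hk]]
    exact taylorSgn_union_right _ _ _ hdKek
  have h2 : taylorSgn {k} ((J ∪ K).erase k)
      = taylorSgn {k} J * taylorSgn {k} (K.erase k) := by
    rw [e1]; exact taylorSgn_union_right _ _ _ hdJKe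
  have h3 : taylorSgn J {k} * taylorSgn {k} J = (-1) ^ J.card := by
    rw [taylorSgn_swap J {k} hdJk]; simp
  rw [h1, h2]
  linear_combination (taylorSgn J (K.erase k) * taylorSgn {k} (K.erase k)) * h3

lemma signC {n : ℕ} {J K : Finset (Fin n)} {i : Fin n} (hiJ : i ∈ J) (hiK : i ∈ K)
    (hd1 : Disjoint (J.erase i) K) :
    taylorSgn {i} (J.erase i) * taylorSgn (J.erase i) K
      + (-1) ^ J.card * (taylorSgn {i} (K.erase i) * taylorSgn J (K.erase i)) = 0 := by
  have hdKei : Disjoint (K.erase i) ({i} : Finset (Fin n)) := by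
    simp [Finset.disjoint_singleton_right]
  have hdiJe : Disjoint ({i} : Finset (Fin n)) (J.erase i) := by
    simp [Finset.disjoint_singleton_left]
  have hdiKe : Disjoint ({i} : Finset (Fin n)) (K.erase i) := by
    simp [Finset.disjoint_singleton_left]
  have hdJei : Disjoint (J.erase i) ({i} : Finset (Fin n)) := by
    simp [Finset.disjoint_singleton_right]
  have h1 : taylorSgn (J.erase i) K
      = taylorSgn (J.erase i) (K.erase i) * taylorSgn (J.erase i) {i} := by
    conv_lhs => rw [show K = K.erase i ∪ {i} by
      rw [Finset.union_comm, ← Finset.insert_eq, Finset.insert_erase hiK]]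
    exact taylorSgn_union_right _ _ _ hdKei
  have h2 : taylorSgn J (K.erase i)
      = taylorSgn {i} (K.erase i) * taylorSgn (J.erase i) (K.erase i) := by
    conv_lhs => rw [show J = {i} ∪ J.erase i by
      rw [← Finset.insert_eq, Finset.insert_erase hiJ]]
    exact taylorSgn_union_left _ _ _ hdiJe
  have h3 : taylorSgn (J.erase i) {i} * taylorSgn {i} (J.erase i)
      = (-1) ^ (J.card - 1) := by
    rw [taylorSgn_swap _ _ hdJei]
    simp [Finset.card_erase_of_mem hiJ]
  have h4 := taylorSgn_sq {i} (K.erase i) hdiKe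
  have hpow : ((-1 : ℤ)) ^ J.card = (-1) ^ (J.card - 1) * (-1) := by
    rw [← pow_succ]
    congr 1
    have : 1 ≤ J.card := Finset.card_pos.mpr ⟨i, hiJ⟩
    omega
  rw [h1, h2, hpow]
  linear_combination (taylorSgn (J.erase i) (K.erase i)) * h3
    - ((-1 : ℤ) ^ (J.card - 1) * taylorSgn (J.erase i) (K.erase i)) * h4

/-- The Taylor complex satisfies the Leibniz rule:
`∂(b_J · b_K) = ∂(b_J) · b_K + (−1)^{|J|} b_J · ∂(b_K)` for all `J, K ⊆ [n]`. -/
theorem taylor_leibniz {Q : Type*} [CommRing Q] {n d : ℕ}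
    (x : Fin d → Q) (a : Fin n → Fin d → ℕ)
    (D : (Finset (Fin n) →₀ Q) →ₗ[Q] (Finset (Fin n) →₀ Q))
    (hD : ∀ J : Finset (Fin n), D (Finsupp.single J 1) =
      ∑ i ∈ J, Finsupp.single (J.erase i)
        ((taylorSgn {i} (J.erase i) : Q) * quotMonomial x a J (J.erase i)))
    (mul : (Finset (Fin n) →₀ Q) →ₗ[Q] (Finset (Fin n) →₀ Q) →ₗ[Q] (Finset (Fin n) →₀ Q))
    (hmul : ∀ J K : Finset (Fin n), mul (Finsupp.single J 1) (Finsupp.single K 1) =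
      if Disjoint J K then
        Finsupp.single (J ∪ K)
          ((taylorSgn J K : Q) * ∏ l, x l ^ (maxExp a J l + maxExp a K l - maxExp a (J ∪ K) l))
      else 0) :
    ∀ J K : Finset (Fin n),
      D (mul (Finsupp.single J 1) (Finsupp.single K 1)) =
        mul (D (Finsupp.single J 1)) (Finsupp.single K 1) +
          ((-1 : Q) ^ J.card) • mul (Finsupp.single J 1) (D (Finsupp.single K 1)) := by
  intro J K
  have keysmul : ∀ (S : Finset (Fin n)) (c : Q),
      Finsupp.single S c = c • Finsupp.single S (1 : Q) :=
    fun S c => by rw [Finsupp.smul_single', mul_one]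
  by_cases hd : Disjoint J K
  · -- disjoint case
    rw [hmul J K, if_pos hd, keysmul, map_smul, hD (J ∪ K), Finset.smul_sum,
      Finset.sum_union hd, hD J, hD K, map_sum, LinearMap.sum_apply, map_sum,
      Finset.smul_sum]
    have termJ : ∀ i ∈ J,
        (mul (Finsupp.single (J.erase i)
          ((taylorSgn {i} (J.erase i) : Q) * quotMonomial x a J (J.erase i))))
          (Finsupp.single K 1)
        = Finsupp.single ((J ∪ K).erase i)
            (((taylorSgn {i} (J.erase i) : Q) * quotMonomial x a J (J.erase i)) *
             ((taylorSgn (J.erase i) K : Q) *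
               ∏ l, x l ^ (maxExp a (J.erase i) l + maxExp a K l
                 - maxExp a (J.erase i ∪ K) l))) := by
      intro i hi
      have hiK : i ∉ K := Finset.disjoint_left.mp hd hi
      have e1 : (J ∪ K).erase i = J.erase i ∪ K := by
        rw [Finset.erase_union_distrib, Finset.erase_eq_of_notMem hiK]
      rw [keysmul (J.erase i), map_smul, LinearMap.smul_apply, hmul,
        if_pos (hd.mono_left (Finset.erase_subset _ _)), Finsupp.smul_single', e1]
    have termK : ∀ k ∈ K,
        ((-1 : Q) ^ J.card) • (mul (Finsupp.single J (1 : Q)))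
          (Finsupp.single (K.erase k)
            ((taylorSgn {k} (K.erase k) : Q) * quotMonomial x a K (K.erase k)))
        = ((-1 : Q) ^ J.card) • Finsupp.single ((J ∪ K).erase k)
            (((taylorSgn {k} (K.erase k) : Q) * quotMonomial x a K (K.erase k)) *
             ((taylorSgn J (K.erase k) : Q) *
               ∏ l, x l ^ (maxExp a J l + maxExp a (K.erase k) l
                 - maxExp a (J ∪ K.erase k) l))) := by
      intro k hk
      have hkJ : k ∉ J := Finset.disjoint_right.mp hd hk
      have e1 : (J ∪ K).erase k = J ∪ K.erase k := by
        rw [Finset.erase_union_distrib, Finset.erase_eq_of_notMem hkJ]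
      rw [keysmul (K.erase k), map_smul, hmul,
        if_pos (hd.mono_right (Finset.erase_subset _ _)), Finsupp.smul_single', e1]
    rw [Finset.sum_congr rfl termJ, Finset.sum_congr rfl termK]
    congr 1
    · apply Finset.sum_congr rfl
      intro i hi
      have hiK : i ∉ K := Finset.disjoint_left.mp hd hi
      rw [Finsupp.smul_single']
      congr 1
      have hs := signJ hd hi
      have hsQ := congrArg (fun z : ℤ => (z : Q)) hs
      push_cast at hsQ
      have hm := monoJ x a hi hiK
      calc ((taylorSgn J K : Q) *
              ∏ l, x l ^ (maxExp a J l + maxExp a K l - maxExp a (J ∪ K) l)) *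
            ((taylorSgn {i} ((J ∪ K).erase i) : Q) *
              quotMonomial x a (J ∪ K) ((J ∪ K).erase i))
          = ((taylorSgn J K : Q) * (taylorSgn {i} ((J ∪ K).erase i) : Q)) *
            ((∏ l, x l ^ (maxExp a J l + maxExp a K l - maxExp a (J ∪ K) l)) *
              quotMonomial x a (J ∪ K) ((J ∪ K).erase i)) := by ring
        _ = ((taylorSgn {i} (J.erase i) : Q) * (taylorSgn (J.erase i) K : Q)) *
            (quotMonomial x a J (J.erase i) *
              ∏ l, x l ^ (maxExp a (J.erase i) l + maxExp a K l
                - maxExp a (J.erase i ∪ K) l)) := by rw [hsQ, hm]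
        _ = _ := by ring
    · apply Finset.sum_congr rfl
      intro k hk
      have hkJ : k ∉ J := Finset.disjoint_right.mp hd hk
      rw [Finsupp.smul_single', Finsupp.smul_single']
      congr 1
      have hs := signK hd hk
      have hsQ := congrArg (fun z : ℤ => (z : Q)) hs
      push_cast at hsQ
      have hm := monoK x a hk hkJ
      calc ((taylorSgn J K : Q) *
              ∏ l, x l ^ (maxExp a J l + maxExp a K l - maxExp a (J ∪ K) l)) *
            ((taylorSgn {k} ((J ∪ K).erase k) : Q) *
              quotMonomial x a (J ∪ K) ((J ∪ K).erase k))
          = ((taylorSgn J K : Q) * (taylorSgn {k} ((J ∪ K).erase k) : Q)) *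
            ((∏ l, x l ^ (maxExp a J l + maxExp a K l - maxExp a (J ∪ K) l)) *
              quotMonomial x a (J ∪ K) ((J ∪ K).erase k)) := by ring
        _ = ((-1 : Q) ^ J.card *
              ((taylorSgn {k} (K.erase k) : Q) * (taylorSgn J (K.erase k) : Q))) *
            (quotMonomial x a K (K.erase k) *
              ∏ l, x l ^ (maxExp a J l + maxExp a (K.erase k) l
                - maxExp a (J ∪ K.erase k) l)) := by rw [hsQ, hm]
        _ = _ := by ring
  · -- non-disjoint case
    rw [hmul J K, if_neg hd, map_zero, hD J, hD K, map_sum, LinearMap.sum_apply,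
      map_sum, Finset.smul_sum]
    obtain ⟨i₀, hi₀J, hi₀K⟩ := Finset.not_disjoint_iff.mp hd
    have termJ0 : ∀ i ∈ J, ¬ Disjoint (J.erase i) K →
        (mul (Finsupp.single (J.erase i)
          ((taylorSgn {i} (J.erase i) : Q) * quotMonomial x a J (J.erase i))))
          (Finsupp.single K 1) = 0 := by
      intro i _ hdis
      rw [keysmul (J.erase i), map_smul, LinearMap.smul_apply, hmul, if_neg hdis,
        smul_zero]
    have termK0 : ∀ k ∈ K, ¬ Disjoint J (K.erase k) →
        (mul (Finsupp.single J (1 : Q)))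
          (Finsupp.single (K.erase k)
            ((taylorSgn {k} (K.erase k) : Q) * quotMonomial x a K (K.erase k))) = 0 := by
      intro k _ hdis
      rw [keysmul (K.erase k), map_smul, hmul, if_neg hdis, smul_zero]
    by_cases hone : J ∩ K = {i₀}
    · have hd1 : Disjoint (J.erase i₀) K := by
        rw [Finset.disjoint_left]
        intro y hy hyK
        have : y ∈ J ∩ K := Finset.mem_inter.mpr ⟨Finset.mem_of_mem_erase hy, hyK⟩
        rw [hone, Finset.mem_singleton] at this
        exact (Finset.ne_of_mem_erase hy) this
      have hd2 : Disjoint J (K.erase i₀) := by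
        rw [Finset.disjoint_right]
        intro y hy hyJ
        have : y ∈ J ∩ K := Finset.mem_inter.mpr ⟨hyJ, Finset.mem_of_mem_erase hy⟩
        rw [hone, Finset.mem_singleton] at this
        exact (Finset.ne_of_mem_erase hy) this
      rw [Finset.sum_eq_single_of_mem i₀ hi₀J (fun b hb hne => termJ0 b hb
        (Finset.not_disjoint_iff.mpr ⟨i₀, Finset.mem_erase.mpr ⟨Ne.symm hne, hi₀J⟩, hi₀K⟩))]
      rw [Finset.sum_eq_single_of_mem i₀ hi₀K (fun b hb hne => by
        rw [termK0 b hb (Finset.not_disjoint_iff.mpr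
          ⟨i₀, hi₀J, Finset.mem_erase.mpr ⟨Ne.symm hne, hi₀K⟩⟩), smul_zero])]
      have e1 : J.erase i₀ ∪ K = J ∪ K := by
        ext y
        simp only [Finset.mem_union, Finset.mem_erase]
        constructor
        · rintro (⟨_, h⟩ | h)
          · exact Or.inl h
          · exact Or.inr h
        · rintro (h | h)
          · by_cases hy : y = i₀
            · exact Or.inr (hy ▸ hi₀K)
            · exact Or.inl ⟨hy, h⟩
          · exact Or.inr h
      have e2 : J ∪ K.erase i₀ = J ∪ K := by
        ext y
        simp only [Finset.mem_union, Finset.mem_erase]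
        constructor
        · rintro (h | ⟨_, h⟩)
          · exact Or.inl h
          · exact Or.inr h
        · rintro (h | h)
          · exact Or.inl h
          · by_cases hy : y = i₀
            · exact Or.inl (hy ▸ hi₀J)
            · exact Or.inr ⟨hy, h⟩
      rw [keysmul (J.erase i₀), map_smul, LinearMap.smul_apply, hmul, if_pos hd1,
        Finsupp.smul_single', e1, keysmul (K.erase i₀), map_smul, hmul, if_pos hd2,
        Finsupp.smul_single', e2, Finsupp.smul_single']
      rw [← Finsupp.single_add]
      symm
      rw [Finsupp.single_eq_zero]
      have hs := signC hi₀J hi₀K hd1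
      have hsQ := congrArg (fun z : ℤ => (z : Q)) hs
      push_cast at hsQ
      have hm := monoC x a hi₀J hi₀K
      rw [e1, e2] at hm
      linear_combination (quotMonomial x a J (J.erase i₀) *
          ∏ l, x l ^ (maxExp a (J.erase i₀) l + maxExp a K l
            - maxExp a (J ∪ K) l)) * hsQ
        - ((-1 : Q) ^ J.card * ((taylorSgn {i₀} (K.erase i₀) : Q) *
            (taylorSgn J (K.erase i₀) : Q))) * hm
    · have hnd1 : ∀ i ∈ J, ¬ Disjoint (J.erase i) K := by
        intro i hi hdis
        apply hone
        have hii : i₀ = i := by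
          by_contra hne
          exact Finset.disjoint_left.mp hdis (Finset.mem_erase.mpr ⟨hne, hi₀J⟩) hi₀K
        subst hii
        ext y
        simp only [Finset.mem_inter, Finset.mem_singleton]
        constructor
        · rintro ⟨hyJ, hyK⟩
          by_contra hy
          exact Finset.disjoint_left.mp hdis (Finset.mem_erase.mpr ⟨hy, hyJ⟩) hyK
        · rintro rfl; exact ⟨hi₀J, hi₀K⟩
      have hnd2 : ∀ k ∈ K, ¬ Disjoint J (K.erase k) := by
        intro k hk hdis
        apply hone
        have hkk : i₀ = k := by
          by_contra hne
          exact Finset.disjoint_left.mp hdis hi₀J (Finset.mem_erase.mpr ⟨hne, hi₀K⟩)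
        subst hkk
        ext y
        simp only [Finset.mem_inter, Finset.mem_singleton]
        constructor
        · rintro ⟨hyJ, hyK⟩
          by_contra hy
          exact Finset.disjoint_left.mp hdis hyJ (Finset.mem_erase.mpr ⟨hy, hyK⟩)
        · rintro rfl; exact ⟨hi₀J, hi₀K⟩
      rw [Finset.sum_eq_zero (fun i hi => termJ0 i hi (hnd1 i hi)),
        Finset.sum_eq_zero (fun k hk => by rw [termK0 k hk (hnd2 k hk), smul_zero]),
        add_zero]
end

section
/- Let Q be a unique factorization domain and let f₁, f₂ be nonzero elements of Q. Let d be a greatest common divisor of f₁ and f₂, and write f₁ = d·f₁' and f₂ = d·f₂'. Then the kernel of the Q-linear map Q² → Q given by (u,v) ↦ u·f₁ + v·f₂ is exactly the image of the Q-linear map Q → Q² given by q ↦ (−q·f₂', q·f₁'), and the latter map is injective. In other words, the Taylor complex 0 → Q → Q² → Q on f₁, f₂, with maps q ↦ (−q f₂', q f₁') and (u,v) ↦ u f₁ + v f₂, is exact at Q² and at the leftmost Q, and is hence a free resolution of Q/(f₁,f₂). -/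
/-- Let `Q` be a UFD and `f₁, f₂` nonzero elements, `d` a gcd of `f₁, f₂`, with
`f₁ = d·f₁'` and `f₂ = d·f₂'`. Then the map `q ↦ (−q·f₂', q·f₁')` is injective and its image
is exactly the kernel of `(u,v) ↦ u·f₁ + v·f₂`; i.e. the Taylor complex
`0 → Q → Q² → Q` on `f₁, f₂` is exact at `Q²` and at the leftmost `Q`, hence a free
resolution of `Q/(f₁,f₂)`. -/
theorem taylor_complex_two_generators_exact {Q : Type*} [CommRing Q] [IsDomain Q]
    [UniqueFactorizationMonoid Q]
    (f₁ f₂ d f₁' f₂' : Q) (hf₁ : f₁ ≠ 0) (hf₂ : f₂ ≠ 0)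
    (hd₁ : d ∣ f₁) (hd₂ : d ∣ f₂) (hdgcd : ∀ e : Q, e ∣ f₁ → e ∣ f₂ → e ∣ d)
    (hf₁' : f₁ = d * f₁') (hf₂' : f₂ = d * f₂') :
    Function.Injective (fun q : Q => (-(q * f₂'), q * f₁')) ∧
    ∀ u v : Q, u * f₁ + v * f₂ = 0 ↔ ∃ q : Q, u = -(q * f₂') ∧ v = q * f₁' := by
  have hd0 : d ≠ 0 := fun h => hf₁ (by simp [hf₁', h])
  have hf₁'0 : f₁' ≠ 0 := fun h => hf₁ (by simp [hf₁', h])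
  have hf₂'0 : f₂' ≠ 0 := fun h => hf₂ (by simp [hf₂', h])
  have hcop : IsRelPrime f₁' f₂' := by
    intro e he1 he2
    have h1 : d * e ∣ f₁ := by rw [hf₁']; exact mul_dvd_mul_left d he1
    have h2 : d * e ∣ f₂ := by rw [hf₂']; exact mul_dvd_mul_left d he2
    have := hdgcd _ h1 h2
    obtain ⟨c, hc⟩ := this
    have : d * 1 = d * (e * c) := by rw [mul_one]; rw [mul_assoc] at hc; exact hc
    exact IsUnit.of_mul_eq_one (a := e) c (mul_left_cancel₀ hd0 this).symm
  constructor
  · intro q q' h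
    have := congrArg Prod.snd h
    simp only at this
    exact mul_right_cancel₀ hf₁'0 this
  · intro u v
    constructor
    · intro h
      have key : u * f₁' + v * f₂' = 0 := by
        have : d * (u * f₁' + v * f₂') = 0 := by
          rw [hf₁', hf₂'] at h; ring_nf at h ⊢; linear_combination h
        exact (mul_eq_zero.mp this).resolve_left hd0
      have hdvd : f₂' ∣ u * f₁' := ⟨-v, by linear_combination key⟩
      have : f₂' ∣ u := (hcop.symm.dvd_of_dvd_mul_right hdvd)
      obtain ⟨c, hc⟩ := this
      refine ⟨-c, ?_, ?_⟩
      · rw [hc]; ring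
      · have : f₂' * (c * f₁' + v) = 0 := by rw [hc] at key; linear_combination key
        have := (mul_eq_zero.mp this).resolve_left hf₂'0
        linear_combination this
    · rintro ⟨q, hu, hv⟩
      rw [hu, hv, hf₁', hf₂']; ring
end

section
/- Let k be a field and Q = k⟦a,b,c,d⟧ the formal power series ring in four variables. Set f₁ = c², f₂ = cd, f₃ = a²c + d³, f₄ = b²d + ad², f₅ = ab, and I = (f₁,…,f₅). Let J = (f₁, f₂, f₃ + d·f₅, f₄ + c·f₅). Then I = J + (f₅), and the image of f₅ = ab in the quotient ring Q/J is a nonzerodivisor. Consequently, J and f₅ determine an embedded deformation of R = Q/I of codimension 1. -/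
open MvPowerSeries

open MvPowerSeries Finsupp

noncomputable section IyengarAux

namespace IyengarAux

set_option linter.unusedSectionVars false
set_option maxHeartbeats 1000000

variable {σ : Type*} [DecidableEq σ] {R : Type*} [CommRing R]

/-- Kill all monomials involving the variable `i`. -/
def killFun (i : σ) (x : MvPowerSeries σ R) : MvPowerSeries σ R :=
  fun m => if m i = 0 then MvPowerSeries.coeff m x else 0

lemma coeff_killFun (i : σ) (x : MvPowerSeries σ R) (m : σ →₀ ℕ) :
    MvPowerSeries.coeff m (killFun i x) =
      if m i = 0 then MvPowerSeries.coeff m x else 0 := rfl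

/-- Killing variable `i` as a ring homomorphism. -/
def kill (i : σ) : MvPowerSeries σ R →+* MvPowerSeries σ R where
  toFun := killFun i
  map_one' := by
    ext m
    rw [coeff_killFun, MvPowerSeries.coeff_one]
    by_cases hm : m = 0
    · simp [hm]
    · rw [if_neg hm]
      split <;> simp [hm]
  map_mul' := fun x y => by
    ext m
    show MvPowerSeries.coeff m (killFun i (x * y)) =
      MvPowerSeries.coeff m (killFun i x * killFun i y)
    rw [coeff_killFun, MvPowerSeries.coeff_mul, MvPowerSeries.coeff_mul]
    by_cases hm : m i = 0
    · rw [if_pos hm]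
      apply Finset.sum_congr rfl
      rintro ⟨u, v⟩ huv
      rw [Finset.HasAntidiagonal.mem_antidiagonal] at huv
      have huvi : u i + v i = 0 := by
        have := congrArg (fun f => f i) huv
        simpa using this.trans hm
      rw [coeff_killFun, coeff_killFun, if_pos (by omega : u i = 0),
        if_pos (by omega : v i = 0)]
    · rw [if_neg hm]
      symm
      apply Finset.sum_eq_zero
      rintro ⟨u, v⟩ huv
      rw [Finset.HasAntidiagonal.mem_antidiagonal] at huv
      have huvi : u i + v i = m i := by
        have := congrArg (fun f => f i) huv
        simpa using this
      rcases Nat.eq_zero_or_pos (u i) with hu | hu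
      · have hv : v i ≠ 0 := by omega
        rw [coeff_killFun (i := i) y, if_neg hv, mul_zero]
      · have hu' : u i ≠ 0 := by omega
        rw [coeff_killFun (i := i) x, if_neg hu', zero_mul]
  map_zero' := by ext m; simp [coeff_killFun]
  map_add' := fun x y => by
    ext m
    show MvPowerSeries.coeff m (killFun i (x + y)) =
      MvPowerSeries.coeff m (killFun i x + killFun i y)
    rw [map_add, coeff_killFun, coeff_killFun, coeff_killFun, map_add]
    split <;> simp

lemma coeff_kill (i : σ) (x : MvPowerSeries σ R) (m : σ →₀ ℕ) :
    MvPowerSeries.coeff m (kill i x) =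
      if m i = 0 then MvPowerSeries.coeff m x else 0 :=
  coeff_killFun i x m

lemma kill_X_self (i : σ) : kill i (X i : MvPowerSeries σ R) = 0 := by
  ext m
  rw [coeff_kill, MvPowerSeries.coeff_X, map_zero]
  split_ifs with h1 h2
  · exfalso; rw [h2] at h1; simp at h1
  · rfl
  · rfl

lemma kill_X_ne {i j : σ} (h : j ≠ i) : kill i (X j : MvPowerSeries σ R) = X j := by
  ext m
  rw [coeff_kill, MvPowerSeries.coeff_X]
  split_ifs with h1 h2 h3
  · rfl
  · rfl
  · exfalso; rw [h3] at h1; simp [Finsupp.single_apply, h] at h1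
  · rfl

/-- Divide by the variable `i` (dropping terms not divisible by it). -/
def divX (i : σ) (x : MvPowerSeries σ R) : MvPowerSeries σ R :=
  fun m => MvPowerSeries.coeff (m + Finsupp.single i 1) x

lemma coeff_divX (i : σ) (x : MvPowerSeries σ R) (m : σ →₀ ℕ) :
    MvPowerSeries.coeff m (divX i x) =
      MvPowerSeries.coeff (m + Finsupp.single i 1) x := rfl

lemma kill_add_X_mul_divX (i : σ) (x : MvPowerSeries σ R) :
    kill i x + X i * divX i x = x := by
  ext m
  rw [map_add, coeff_kill, MvPowerSeries.X, MvPowerSeries.coeff_monomial_mul]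
  by_cases hm : m i = 0
  · rw [if_pos hm, if_neg, add_zero]
    intro hle
    rw [Finsupp.single_le_iff] at hle
    omega
  · have hle : Finsupp.single i 1 ≤ m := by
      rw [Finsupp.single_le_iff]; omega
    rw [if_neg hm, if_pos hle, one_mul, coeff_divX, zero_add,
      tsub_add_cancel_of_le hle]

lemma kill_kill_self (i : σ) (x : MvPowerSeries σ R) : kill i (kill i x) = kill i x := by
  ext m
  rw [coeff_kill, coeff_kill]
  by_cases h : m i = 0 <;> simp [h, coeff_kill]

lemma kill_comm (i j : σ) (x : MvPowerSeries σ R) :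
    kill i (kill j x) = kill j (kill i x) := by
  ext m
  by_cases h : m i = 0 <;> by_cases h' : m j = 0 <;>
    simp [h, h', coeff_kill]

lemma kill_divX_ne {i j : σ} (h : i ≠ j) (x : MvPowerSeries σ R) :
    kill i (divX j x) = divX j (kill i x) := by
  ext m
  rw [coeff_kill, coeff_divX, coeff_divX, coeff_kill]
  have : ((m + Finsupp.single j 1 : σ →₀ ℕ)) i = m i := by
    simp [Finsupp.add_apply, Finsupp.single_apply, Ne.symm h]
  rw [this]

lemma X_ne_zero' [Nontrivial R] (i : σ) : (X i : MvPowerSeries σ R) ≠ 0 := by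
  intro h
  have := congrArg (MvPowerSeries.coeff (Finsupp.single i 1)) h
  rw [MvPowerSeries.coeff_X, if_pos rfl, map_zero] at this
  exact one_ne_zero this

lemma mem_span_quadruple {g1 g2 g3 g4 x : R} (h : x ∈ Ideal.span {g1, g2, g3, g4}) :
    ∃ p q r s, x = p * g1 + q * g2 + r * g3 + s * g4 := by
  rw [show ({g1, g2, g3, g4} : Set R) = insert g1 {g2, g3, g4} from rfl,
    Ideal.mem_span_insert] at h
  obtain ⟨p, z1, hz1, rfl⟩ := h
  rw [show ({g2, g3, g4} : Set R) = insert g2 {g3, g4} from rfl,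
    Ideal.mem_span_insert] at hz1
  obtain ⟨q, z2, hz2, rfl⟩ := hz1
  rw [Ideal.mem_span_pair] at hz2
  obtain ⟨r, s, rfl⟩ := hz2
  exact ⟨p, q, r, s, by ring⟩

lemma mem_span_triple {g1 g2 g3 x : R} (h : x ∈ Ideal.span {g1, g2, g3}) :
    ∃ p q r, x = p * g1 + q * g2 + r * g3 := by
  rw [show ({g1, g2, g3} : Set R) = insert g1 {g2, g3} from rfl,
    Ideal.mem_span_insert] at h
  obtain ⟨p, z1, hz1, rfl⟩ := h
  rw [Ideal.mem_span_pair] at hz1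
  obtain ⟨q, r, rfl⟩ := hz1
  exact ⟨p, q, r, by ring⟩

section FieldCase

variable {k : Type*} [Field k]

local instance : IsDomain (MvPowerSeries (Fin 4) k) := NoZeroDivisors.to_isDomain _

local notation "XA" => (MvPowerSeries.X (0 : Fin 4) : MvPowerSeries (Fin 4) k)
local notation "XB" => (MvPowerSeries.X (1 : Fin 4) : MvPowerSeries (Fin 4) k)
local notation "XC" => (MvPowerSeries.X (2 : Fin 4) : MvPowerSeries (Fin 4) k)
local notation "XD" => (MvPowerSeries.X (3 : Fin 4) : MvPowerSeries (Fin 4) k)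
local notation "UU" => (XD^2 + XA*XB)
local notation "VV" => (XB^2 + XA*XD)
local notation "WW" => (XA^2 - XB*XD)

-- the kill maps on the variables
lemma k0A : kill 0 XA = 0 := kill_X_self 0
lemma k0B : kill 0 XB = XB := kill_X_ne (by decide)
lemma k0C : kill 0 XC = XC := kill_X_ne (by decide)
lemma k0D : kill 0 XD = XD := kill_X_ne (by decide)
lemma k1A : kill 1 XA = XA := kill_X_ne (by decide)
lemma k1B : kill 1 XB = 0 := kill_X_self 1
lemma k1C : kill 1 XC = XC := kill_X_ne (by decide)
lemma k1D : kill 1 XD = XD := kill_X_ne (by decide)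
lemma k2A : kill 2 XA = XA := kill_X_ne (by decide)
lemma k2B : kill 2 XB = XB := kill_X_ne (by decide)
lemma k2C : kill 2 XC = 0 := kill_X_self 2
lemma k2D : kill 2 XD = XD := kill_X_ne (by decide)
lemma k3A : kill 3 XA = XA := kill_X_ne (by decide)
lemma k3B : kill 3 XB = XB := kill_X_ne (by decide)
lemma k3C : kill 3 XC = XC := kill_X_ne (by decide)
lemma k3D : kill 3 XD = 0 := kill_X_self 3

lemma cancelX (i : Fin 4) {u v : MvPowerSeries (Fin 4) k}
    (h : X i * u = X i * v) : u = v :=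
  mul_left_cancel₀ (X_ne_zero' i) h

lemma eqzero_of_X_mul (i : Fin 4) {u : MvPowerSeries (Fin 4) k}
    (h : X i * u = 0) : u = 0 := by
  rcases mul_eq_zero.mp h with h' | h'
  · exact absurd h' (X_ne_zero' i)
  · exact h'

lemma eqzero_of_mul_ab {u : MvPowerSeries (Fin 4) k}
    (h : u * (XA * XB) = 0) : u = 0 := by
  rcases mul_eq_zero.mp h with h' | h'
  · exact h'
  · exact absurd h' (mul_ne_zero (X_ne_zero' 0) (X_ne_zero' 1))

/-- `d` is a nonzerodivisor modulo `K = (U, V, W)`. -/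
lemma d_regular_mod_K {e : MvPowerSeries (Fin 4) k}
    (he : XD * e ∈ Ideal.span {UU, VV, WW}) : e ∈ Ideal.span {UU, VV, WW} := by
  obtain ⟨p, q, r, hpqr⟩ := mem_span_triple he
  -- apply kill 3
  have h3 : 0 = kill 3 p * (XA*XB) + kill 3 q * XB^2 + kill 3 r * XA^2 := by
    have h := congrArg (kill 3) hpqr
    simp only [map_add, map_mul, map_pow, map_sub, k3A, k3B, k3C, k3D] at h
    linear_combination h
  -- apply kill 0 : get kill 0 (kill 3 q) = 0
  have hq0 : kill 0 (kill 3 q) = 0 := by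
    have h := congrArg (kill 0) h3
    simp only [map_add, map_mul, map_pow, map_zero, k0A, k0B] at h
    have h' : (XB^2) * kill 0 (kill 3 q) = 0 := by linear_combination -h
    have := mul_eq_zero.mp h'
    rcases this with h'' | h''
    · exact absurd h'' (pow_ne_zero 2 (X_ne_zero' 1))
    · exact h''
  have hr0 : kill 1 (kill 3 r) = 0 := by
    have h := congrArg (kill 1) h3
    simp only [map_add, map_mul, map_pow, map_zero, k1A, k1B] at h
    have h' : (XA^2) * kill 1 (kill 3 r) = 0 := by linear_combination -h
    rcases mul_eq_zero.mp h' with h'' | h''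
    · exact absurd h'' (pow_ne_zero 2 (X_ne_zero' 0))
    · exact h''
  -- kill 3 q = XA * q1, kill 3 r = XB * r1
  have hqA : kill 3 q = XA * divX 0 (kill 3 q) := by
    have := kill_add_X_mul_divX 0 (kill 3 q)
    rw [hq0, zero_add] at this
    exact this.symm
  have hrB : kill 3 r = XB * divX 1 (kill 3 r) := by
    have := kill_add_X_mul_divX 1 (kill 3 r)
    rw [hr0, zero_add] at this
    exact this.symm
  set q1 := divX 0 (kill 3 q) with hq1def
  set r1 := divX 1 (kill 3 r) with hr1def
  -- kill 3 p = -(XB*q1) - XA*r1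
  have hpAB : kill 3 p = -(XB*q1) - XA*r1 := by
    have h' : (XA*XB) * (kill 3 p + XB*q1 + XA*r1) = 0 := by
      linear_combination -h3 - XB^2 * hqA - XA^2 * hrB
    have h'' := eqzero_of_mul_ab (u := kill 3 p + XB*q1 + XA*r1) (by linear_combination h')
    linear_combination h''
  -- decompositions along d
  have hpe : p = -(XB*q1) - XA*r1 + XD * divX 3 p := by
    have := kill_add_X_mul_divX 3 p
    rw [hpAB] at this
    linear_combination -this
  have hqe : q = XA*q1 + XD * divX 3 q := by
    have := kill_add_X_mul_divX 3 q
    rw [hqA] at this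
    linear_combination -this
  have hre : r = XB*r1 + XD * divX 3 r := by
    have := kill_add_X_mul_divX 3 r
    rw [hrB] at this
    linear_combination -this
  have key : XD * e = XD * (divX 3 p * UU + (divX 3 q - r1) * VV + (divX 3 r + q1) * WW) := by
    linear_combination hpqr + UU * hpe + VV * hqe + WW * hre
  have he' := cancelX 3 key
  rw [he']
  have hU : UU ∈ Ideal.span {UU, VV, WW} := Ideal.subset_span (by simp)
  have hV : VV ∈ Ideal.span {UU, VV, WW} := Ideal.subset_span (by simp)
  have hW : WW ∈ Ideal.span {UU, VV, WW} := Ideal.subset_span (by simp)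
  exact add_mem (add_mem (Ideal.mul_mem_left _ _ hU) (Ideal.mul_mem_left _ _ hV))
    (Ideal.mul_mem_left _ _ hW)

local notation "G₃" => (XA^2*XC + XD^3 + XD*(XA*XB))
local notation "G₄" => (XB^2*XD + XA*XD^2 + XC*(XA*XB))
local notation "Jspan" => (Ideal.span {XC^2, XC*XD, G₃, G₄} : Ideal (MvPowerSeries (Fin 4) k))

lemma lemE (r s : MvPowerSeries (Fin 4) k) :
    XD*(r*UU + s*VV) + XC*(XA^2*(kill 3 (kill 2 r)) + XA*XB*(kill 3 (kill 2 s))) ∈ Jspan := by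
  have hr1 := kill_add_X_mul_divX 2 r
  have hr2 := kill_add_X_mul_divX 3 (kill 2 r)
  have hs1 := kill_add_X_mul_divX 2 s
  have hs2 := kill_add_X_mul_divX 3 (kill 2 s)
  have hid : XD*(r*UU + s*VV) + XC*(XA^2*(kill 3 (kill 2 r)) + XA*XB*(kill 3 (kill 2 s)))
      = r*G₃ + s*G₄
        - XA^2*(XC^2*(divX 2 r) + XC*XD*(divX 3 (kill 2 r)))
        - XA*XB*(XC^2*(divX 2 s) + XC*XD*(divX 3 (kill 2 s))) := by
    linear_combination XC*XA^2*(hr1 + hr2) + XC*XA*XB*(hs1 + hs2)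
  rw [hid]
  have hg1 : (XC^2 : MvPowerSeries (Fin 4) k) ∈ Jspan := Ideal.subset_span (by simp)
  have hg2 : (XC*XD : MvPowerSeries (Fin 4) k) ∈ Jspan := Ideal.subset_span (by simp)
  have hg3 : (G₃ : MvPowerSeries (Fin 4) k) ∈ Jspan := Ideal.subset_span (by simp)
  have hg4 : (G₄ : MvPowerSeries (Fin 4) k) ∈ Jspan := Ideal.subset_span (by simp)
  refine sub_mem (sub_mem (add_mem (Ideal.mul_mem_left _ _ hg3) (Ideal.mul_mem_left _ _ hg4)) ?_) ?_
  · exact Ideal.mul_mem_left _ _ (add_mem (Ideal.mul_mem_right _ _ hg1) (Ideal.mul_mem_right _ _ hg2))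
  · exact Ideal.mul_mem_left _ _ (add_mem (Ideal.mul_mem_right _ _ hg1) (Ideal.mul_mem_right _ _ hg2))

/-- The main step: `ab` is a nonzerodivisor mod `J`. -/
lemma key_colon (x : MvPowerSeries (Fin 4) k)
    (hx : x * (XA * XB) ∈ Jspan) : x ∈ Jspan := by
  obtain ⟨p, q, r, s, hE⟩ := mem_span_quadruple hx
  -- equation (1): apply kill 2
  have e1 : kill 2 x * (XA*XB) = XD * (kill 2 r * UU + kill 2 s * VV) := by
    have h := congrArg (kill 2) hE
    simp only [map_add, map_mul, map_pow, k2A, k2B, k2C, k2D] at h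
    linear_combination h
  -- c-coefficient equation
  have hxd := kill_add_X_mul_divX 2 x
  have hrd := kill_add_X_mul_divX 2 r
  have hsd := kill_add_X_mul_divX 2 s
  set x2 := divX 2 x with hx2def
  set r2 := divX 2 r with hr2def
  set s2 := divX 2 s with hs2def
  have hcG : XC * (x2*(XA*XB) - (p*XC + q*XD + XA^2*(kill 2 r) + XD*UU*r2
      + XC*XA^2*r2 + XA*XB*(kill 2 s) + XD*VV*s2 + XC*XA*XB*s2)) = 0 := by
    linear_combination hE - e1 + (XA*XB)*hxd - G₃*hrd - G₄*hsd
  have hG := eqzero_of_X_mul 2 hcG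
  -- equation (2): apply kill 2 then kill 3 to hG
  have eq2 : kill 3 (kill 2 x2) * (XA*XB)
      = XA^2 * (kill 3 (kill 2 r)) + XA*XB * (kill 3 (kill 2 s)) := by
    have h := congrArg (kill 3) (congrArg (kill 2) hG)
    simp only [map_add, map_mul, map_pow, map_sub, map_zero, k2A, k2B, k2C, k2D,
      k3A, k3B, k3C, k3D, kill_kill_self, kill_comm 3 2] at h
    linear_combination h
  -- step 1 : kill 2 x = d * y
  have hk3x : kill 3 (kill 2 x) = 0 := by
    have h := congrArg (kill 3) e1
    simp only [map_add, map_mul, map_pow, k3A, k3B, k3C, k3D] at h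
    have h' : kill 3 (kill 2 x) * (XA*XB) = 0 := by linear_combination h
    exact eqzero_of_mul_ab h'
  have hX0 : kill 2 x = XD * divX 3 (kill 2 x) := by
    have := kill_add_X_mul_divX 3 (kill 2 x)
    rw [hk3x, zero_add] at this
    exact this.symm
  set y := divX 3 (kill 2 x) with hydef
  have e1' : y * (XA*XB) = kill 2 r * UU + kill 2 s * VV := by
    apply cancelX 3
    linear_combination e1 - (XA*XB)*hX0
  -- y ∈ K
  have hyK : y ∈ Ideal.span {UU, VV, WW} := by
    apply d_regular_mod_K
    apply d_regular_mod_K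
    have hrw : XD * (XD * y) = (y - kill 2 r) * UU - kill 2 s * VV
        + (0:MvPowerSeries (Fin 4) k) * WW := by
      linear_combination -e1'
    rw [hrw]
    have hU : UU ∈ Ideal.span {UU, VV, WW} := Ideal.subset_span (by simp)
    have hV : VV ∈ Ideal.span {UU, VV, WW} := Ideal.subset_span (by simp)
    have hW : WW ∈ Ideal.span {UU, VV, WW} := Ideal.subset_span (by simp)
    exact add_mem (sub_mem (Ideal.mul_mem_left _ _ hU) (Ideal.mul_mem_left _ _ hV))
      (Ideal.mul_mem_left _ _ hW)
  obtain ⟨t2, t3, h, hy⟩ := mem_span_triple hyK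
  -- push e1' to the a,b-world
  have rhoe1 : kill 3 (kill 2 y) * (XA*XB)
      = kill 3 (kill 2 r) * (XA*XB) + kill 3 (kill 2 s) * XB^2 := by
    have h' := congrArg (kill 3) (congrArg (kill 2) e1')
    simp only [map_add, map_mul, map_pow, k2A, k2B, k2C, k2D, k3A, k3B, k3C, k3D,
      kill_kill_self, kill_comm 3 2] at h'
    linear_combination h'
  -- b x₁ = a ρy
  have hbx : XB * (kill 3 (kill 2 x2)) = XA * (kill 3 (kill 2 y)) := by
    have h0 : (XA*XB) * (XB * (kill 3 (kill 2 x2)) - XA * (kill 3 (kill 2 y))) = 0 := by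
      linear_combination XB*eq2 - XA*rhoe1
    rcases mul_eq_zero.mp h0 with h' | h'
    · exact absurd h' (mul_ne_zero (X_ne_zero' 0) (X_ne_zero' 1))
    · linear_combination h'
  -- push hy to a,b-world
  have rhoy : kill 3 (kill 2 y) = kill 3 (kill 2 t2) * (XA*XB)
      + kill 3 (kill 2 t3) * XB^2 + kill 3 (kill 2 h) * XA^2 := by
    have h' := congrArg (kill 3) (congrArg (kill 2) hy)
    simp only [map_add, map_mul, map_pow, map_sub, k2A, k2B, k2C, k2D,
      k3A, k3B, k3C, k3D, kill_comm 3 2] at h'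
    linear_combination h'
  have hstep : XB * (kill 3 (kill 2 x2) - XA^2 * kill 3 (kill 2 t2)
      - XA*XB * kill 3 (kill 2 t3)) = XA^3 * kill 3 (kill 2 h) := by
    linear_combination hbx + XA*rhoy
  -- kill 1 : ρh = b * qq
  have hk1 : kill 1 (kill 3 (kill 2 h)) = 0 := by
    have h' := congrArg (kill 1) hstep
    simp only [map_add, map_mul, map_pow, map_sub, map_zero, k1A, k1B] at h'
    have h'' : XA^3 * kill 1 (kill 3 (kill 2 h)) = 0 := by linear_combination -h'
    rcases mul_eq_zero.mp h'' with h3 | h3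
    · exact absurd h3 (pow_ne_zero 3 (X_ne_zero' 0))
    · exact h3
  have hqq : kill 3 (kill 2 h) = XB * divX 1 (kill 3 (kill 2 h)) := by
    have := kill_add_X_mul_divX 1 (kill 3 (kill 2 h))
    rw [hk1, zero_add] at this
    exact this.symm
  set qq := divX 1 (kill 3 (kill 2 h)) with hqqdef
  -- x₁ in terms of t2, t3, qq
  have hx1 : kill 3 (kill 2 x2) = XA^2 * kill 3 (kill 2 t2)
      + XA*XB * kill 3 (kill 2 t3) + XA^3 * qq := by
    have hb2 : XB * (kill 3 (kill 2 x2) - XA^2 * kill 3 (kill 2 t2)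
        - XA*XB * kill 3 (kill 2 t3) - XA^3 * qq) = 0 := by
      linear_combination hstep + XA^3*hqq
    have := eqzero_of_X_mul 1 hb2
    linear_combination this
  -- decompose h
  have hh3 := kill_add_X_mul_divX 3 h
  have hh2 := kill_add_X_mul_divX 2 (kill 3 h)
  have hhdec : h = XB*qq + XC*(divX 2 (kill 3 h)) + XD*(divX 3 h) := by
    have hcomm : kill 2 (kill 3 h) = kill 3 (kill 2 h) := kill_comm 2 3 h
    linear_combination -hh3 - hh2 + hcomm + hqq
  set h2 := divX 2 (kill 3 h) with hh2def
  set h3' := divX 3 h with hh3def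
  -- rewrite y
  have hy' : y = (t2 + XA*qq - XB*h3')*UU + (t3 + XA*h3' - XD*qq)*VV + XC*(h2*WW) := by
    linear_combination hy + WW*hhdec
  -- ρ-invariance of qq
  have hqq2 : kill 2 qq = qq := by
    rw [hqqdef, kill_divX_ne (by decide), kill_comm 2 3, kill_kill_self]
  have hqq3 : kill 3 qq = qq := by
    rw [hqqdef, kill_divX_ne (by decide), kill_kill_self]
  -- the value matching
  have hval : XA^2 * (kill 3 (kill 2 (t2 + XA*qq - XB*h3')))
      + XA*XB * (kill 3 (kill 2 (t3 + XA*h3' - XD*qq))) = kill 3 (kill 2 x2) := by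
    simp only [map_add, map_sub, map_mul, k2A, k2B, k2C, k2D, k3A, k3B, k3C, k3D,
      hqq2, hqq3]
    linear_combination -hx1
  -- final decomposition of x
  have hx2d := kill_add_X_mul_divX 2 x2
  have hx2d3 := kill_add_X_mul_divX 3 (kill 2 x2)
  have hfin : x = (XD*((t2 + XA*qq - XB*h3')*UU + (t3 + XA*h3' - XD*qq)*VV)
      + XC*(XA^2*(kill 3 (kill 2 (t2 + XA*qq - XB*h3')))
        + XA*XB*(kill 3 (kill 2 (t3 + XA*h3' - XD*qq)))))
      + XC^2 * (divX 2 x2) + XC*XD*(divX 3 (kill 2 x2) + h2*WW) := by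
    linear_combination -hxd + hX0 - XC*hx2d - XC*hx2d3 + XD*hy' - XC*hval
  rw [hfin]
  have hg1 : (XC^2 : MvPowerSeries (Fin 4) k) ∈ Jspan := Ideal.subset_span (by simp)
  have hg2 : (XC*XD : MvPowerSeries (Fin 4) k) ∈ Jspan := Ideal.subset_span (by simp)
  exact add_mem (add_mem (lemE _ _) (Ideal.mul_mem_right _ _ hg1))
    (Ideal.mul_mem_right _ _ hg2)

end FieldCase

end IyengarAux
end IyengarAux


/-- Iyengar's example: in `Q = k⟦a,b,c,d⟧` with
`f₁ = c², f₂ = cd, f₃ = a²c + d³, f₄ = b²d + ad², f₅ = ab`,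
`I = (f₁,…,f₅)` and `J = (f₁, f₂, f₃ + d f₅, f₄ + c f₅)`, one has `I = J + (f₅)` and the
image of `f₅` in `Q/J` is a nonzerodivisor; so `J` and `f₅` determine an embedded
deformation of `R = Q/I` of codimension `1`. -/
theorem iyengar_embedded_deformation {k : Type*} [Field k]
    (a b c d : MvPowerSeries (Fin 4) k)
    (hA : a = X 0) (hB : b = X 1) (hC : c = X 2) (hD : d = X 3)
    (f₁ f₂ f₃ f₄ f₅ : MvPowerSeries (Fin 4) k)
    (h1 : f₁ = c ^ 2) (h2 : f₂ = c * d) (h3 : f₃ = a ^ 2 * c + d ^ 3)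
    (h4 : f₄ = b ^ 2 * d + a * d ^ 2) (h5 : f₅ = a * b)
    (I J : Ideal (MvPowerSeries (Fin 4) k))
    (hI : I = Ideal.span {f₁, f₂, f₃, f₄, f₅})
    (hJ : J = Ideal.span {f₁, f₂, f₃ + d * f₅, f₄ + c * f₅}) :
    I = J ⊔ Ideal.span {f₅} ∧
      Ideal.Quotient.mk J f₅ ∈ nonZeroDivisors (MvPowerSeries (Fin 4) k ⧸ J) := by
  subst hA hB hC hD h1 h2 h3 h4 h5 hI hJ
  constructor
  · apply le_antisymm
    · rw [Ideal.span_le]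
      intro z hz
      simp only [Set.mem_insert_iff, Set.mem_singleton_iff] at hz
      have hf5 : (X 0 * X 1 : MvPowerSeries (Fin 4) k) ∈
          Ideal.span {(X 0 * X 1 : MvPowerSeries (Fin 4) k)} := Ideal.subset_span rfl
      rcases hz with rfl | rfl | rfl | rfl | rfl
      · exact Ideal.mem_sup_left (Ideal.subset_span (by simp))
      · exact Ideal.mem_sup_left (Ideal.subset_span (by simp))
      · have : ((X 0)^2*(X 2) + (X 3)^3 : MvPowerSeries (Fin 4) k)
            = ((X 0)^2*(X 2) + (X 3)^3 + X 3*(X 0*X 1)) - X 3*(X 0*X 1) := by ring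
        rw [this]
        exact sub_mem (Ideal.mem_sup_left (Ideal.subset_span (by simp)))
          (Ideal.mem_sup_right (Ideal.mul_mem_left _ _ hf5))
      · have : ((X 1)^2*(X 3) + X 0*(X 3)^2 : MvPowerSeries (Fin 4) k)
            = ((X 1)^2*(X 3) + X 0*(X 3)^2 + X 2*(X 0*X 1)) - X 2*(X 0*X 1) := by ring
        rw [this]
        exact sub_mem (Ideal.mem_sup_left (Ideal.subset_span (by simp)))
          (Ideal.mem_sup_right (Ideal.mul_mem_left _ _ hf5))
      · exact Ideal.mem_sup_right (Ideal.subset_span rfl)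
    · apply sup_le
      · rw [Ideal.span_le]
        intro z hz
        simp only [Set.mem_insert_iff, Set.mem_singleton_iff] at hz
        rcases hz with rfl | rfl | rfl | rfl
        · exact Ideal.subset_span (by simp)
        · exact Ideal.subset_span (by simp)
        · exact add_mem (Ideal.subset_span (by simp))
            (Ideal.mul_mem_left _ _ (Ideal.subset_span (by simp)))
        · exact add_mem (Ideal.subset_span (by simp))
            (Ideal.mul_mem_left _ _ (Ideal.subset_span (by simp)))
      · rw [Ideal.span_le]
        intro z hz
        simp only [Set.mem_singleton_iff] at hz
        subst hz
        exact Ideal.subset_span (by simp)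
  · rw [mem_nonZeroDivisors_iff_right]
    intro z hz
    obtain ⟨w, rfl⟩ := Ideal.Quotient.mk_surjective z
    rw [← map_mul, Ideal.Quotient.eq_zero_iff_mem] at hz
    rw [Ideal.Quotient.eq_zero_iff_mem]
    exact IyengarAux.key_colon w hz
end
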